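/- arXiv:1103.6161 — 8 statements merged into one kernel-verified Lean document; each statement's English description precedes it below -/
import Mathlib

section
/- For every real numbers $A$ and $B$, $\int_{-\infty}^\infty\int_{-\infty}^\infty \exp(\sqrt{2}Ax+\sqrt{2}By-\frac{x^2+y^2}{2})\cos(xy)\,dx\,dy = \sqrt{2}\pi e^{(A^2+B^2)/2}\cos(AB)$. -/
open MeasureTheory Real Complex

theorem stmt_0 (A B : ℝ) :
    ∫ y : ℝ, ∫ x : ℝ,
      Real.exp (Real.sqrt 2 * A * x + Real.sqrt 2 * B * y - (x ^ 2 + y ^ 2) / 2)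
        * Real.cos (x * y)
    = Real.sqrt 2 * Real.pi * Real.exp ((A ^ 2 + B ^ 2) / 2) * Real.cos (A * B) := by
  have hb : (-(1/2 : ℂ)).re < 0 := by norm_num
  have hb2 : (-(1 : ℂ)).re < 0 := by norm_num
  have hs : ((Real.sqrt 2 : ℝ) : ℂ)^2 = 2 := by
    rw [← Complex.ofReal_pow, Real.sq_sqrt (by norm_num : (0:ℝ) ≤ 2)]
    norm_num
  -- inner integral
  have inner : ∀ y : ℝ, (∫ x : ℝ,
      Real.exp (Real.sqrt 2 * A * x + Real.sqrt 2 * B * y - (x ^ 2 + y ^ 2) / 2)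
        * Real.cos (x * y)) =
      ((2 * (π : ℂ)) ^ (1/2 : ℂ) *
        Complex.exp (-(1:ℂ) * (y:ℂ)^2 + ((Real.sqrt 2 * B : ℝ) + (Real.sqrt 2 * A : ℝ) * I) * y
          + (A:ℝ)^2)).re := by
    intro y
    have key := integral_cexp_quadratic hb (((Real.sqrt 2 * A : ℝ) : ℂ) + (y:ℂ) * I)
      (((Real.sqrt 2 * B * y : ℝ) : ℂ) - (y:ℂ)^2/2)
    have hre : ∀ x : ℝ,
        Real.exp (Real.sqrt 2 * A * x + Real.sqrt 2 * B * y - (x ^ 2 + y ^ 2) / 2)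
          * Real.cos (x * y)
        = (Complex.exp (-(1/2:ℂ) * (x:ℂ)^2 + (((Real.sqrt 2 * A : ℝ) : ℂ) + (y:ℂ) * I) * x
            + (((Real.sqrt 2 * B * y : ℝ) : ℂ) - (y:ℂ)^2/2))).re := by
      intro x
      rw [Complex.exp_re]
      congr 2
      · simp [Complex.add_re, Complex.mul_re, ← Complex.ofReal_pow]
        ring
      · simp [Complex.add_im, Complex.mul_im, ← Complex.ofReal_pow]
        ring
    simp_rw [hre]
    simp_rw [← RCLike.re_to_complex]
    rw [integral_re (integrable_cexp_quadratic' hb _ _)]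
    simp_rw [RCLike.re_to_complex]
    rw [key]
    congr 2
    · congr 1
      push_cast
      ring
    · have hsq : (((Real.sqrt 2 * A : ℝ) : ℂ) + (y:ℂ) * I)^2
          = 2*(A:ℂ)^2 - (y:ℂ)^2 + 2*((Real.sqrt 2 : ℝ):ℂ)*(A:ℂ)*(y:ℂ)*I := by
        push_cast
        linear_combination (A:ℂ)^2 * hs + (y:ℂ)^2 * Complex.I_sq
      rw [hsq]
      push_cast
      field_simp
      ring
  simp_rw [inner]
  have hint : Integrable (fun y : ℝ => (2 * (π : ℂ)) ^ (1/2 : ℂ) *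
      Complex.exp (-(1:ℂ) * (y:ℂ)^2 + ((Real.sqrt 2 * B : ℝ) + (Real.sqrt 2 * A : ℝ) * I) * (y:ℂ)
        + (A:ℝ)^2)) :=
    (integrable_cexp_quadratic' hb2 _ _).const_mul _
  simp_rw [← RCLike.re_to_complex]
  rw [integral_re hint]
  simp_rw [RCLike.re_to_complex]
  rw [MeasureTheory.integral_const_mul, integral_cexp_quadratic hb2 _ _]
  have hc2 : (((Real.sqrt 2 * B : ℝ) : ℂ) + ((Real.sqrt 2 * A : ℝ) : ℂ) * I)^2
      = 2*(B:ℂ)^2 - 2*(A:ℂ)^2 + 4*(A:ℂ)*(B:ℂ)*I := by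
    push_cast
    linear_combination ((B:ℂ)^2 + 2*(A:ℂ)*(B:ℂ)*I + (A:ℂ)^2*I^2) * hs
      + 2*(A:ℂ)^2 * Complex.I_sq
  have he : ((A:ℝ)^2 : ℂ) - (((Real.sqrt 2 * B : ℝ) : ℂ) + ((Real.sqrt 2 * A : ℝ) : ℂ) * I)^2
        / (4 * -(1:ℂ))
      = (((A^2 + B^2)/2 : ℝ) : ℂ) + ((A*B : ℝ) : ℂ) * I := by
    rw [hc2]
    push_cast
    field_simp
    ring
  rw [he]
  have hp2 : ((π : ℂ) / -(-(1:ℂ))) = ((π : ℝ) : ℂ) := by push_cast; ring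
  rw [hp2]
  have hcpow : ∀ r : ℝ, 0 ≤ r → ((r : ℂ)) ^ (1/2 : ℂ) = ((Real.sqrt r : ℝ) : ℂ) := by
    intro r hr
    rw [Real.sqrt_eq_rpow, Complex.ofReal_cpow hr]
    norm_num
  have h2pi : (0:ℝ) ≤ 2 * π := by positivity
  rw [show (2 * (π : ℂ)) = ((2 * π : ℝ) : ℂ) by push_cast; ring, hcpow _ h2pi,
    hcpow _ Real.pi_pos.le]
  rw [← mul_assoc, ← Complex.ofReal_mul, Complex.re_ofReal_mul, Complex.exp_re]
  have hre2 : ((((A^2 + B^2)/2 : ℝ) : ℂ) + ((A*B : ℝ) : ℂ) * I).re = (A^2 + B^2)/2 := by simp [← Complex.ofReal_pow]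
  have him2 : ((((A^2 + B^2)/2 : ℝ) : ℂ) + ((A*B : ℝ) : ℂ) * I).im = A*B := by simp [← Complex.ofReal_pow]
  rw [hre2, him2]
  rw [show Real.sqrt (2*π) * Real.sqrt π = Real.sqrt 2 * π by
    rw [Real.sqrt_mul (by norm_num), mul_assoc, Real.mul_self_sqrt Real.pi_pos.le]]
  ring
end

section
/- Let $h_5(x) = \frac{4x^5-20x^3+15x}{2\pi^{1/4}\sqrt{15}}$. Then $\int_{-\infty}^\infty\int_{-\infty}^\infty \exp(-\frac{x^2+y^2}{2}) h_5(x)^2 h_5(y)^2 \cos(xy)\,dx\,dy = 49\sqrt{2}$. -/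
open MeasureTheory Real Filter Topology

noncomputable def h5 (x : ℝ) : ℝ :=
  (4 * x ^ 5 - 20 * x ^ 3 + 15 * x) / (2 * Real.pi ^ ((1 : ℝ) / 4) * Real.sqrt 15)

def Qf (x : ℝ) : ℝ := 16*x^10 - 160*x^8 + 520*x^6 - 600*x^4 + 225*x^2
def Rf (y : ℝ) : ℝ := 4545 - 28425*y^2 + 24000*y^4 - 6120*y^6 + 560*y^8 - 16*y^10

lemma ig {b : ℝ} (hb : 0 < b) (k : ℕ) : Integrable (fun x : ℝ => x^k * Real.exp (-b*x^2)) := by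
  have h := integrable_rpow_mul_exp_neg_mul_sq hb (s := (k:ℝ))
    (lt_of_lt_of_le neg_one_lt_zero (Nat.cast_nonneg k))
  simpa [Real.rpow_natCast] using h

lemma term_integrable {b : ℝ} (c : ℝ) (hb : 0 < b) (k : ℕ) {t : ℝ → ℝ} (htc : Continuous t)
    (ht : ∀ u, |t u| ≤ 1) : Integrable (fun x : ℝ => x^k * Real.exp (-b*x^2) * t x * c) := by
  have h := ((ig hb k).bdd_mul (c := 1) htc.aestronglyMeasurable
    (ae_of_all _ (by simpa [Real.norm_eq_abs] using ht))).mul_const c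
  exact h.congr (ae_of_all _ fun x => by ring)

lemma term_tendsto {b : ℝ} (c : ℝ) (hb : 0 < b) (k : ℕ) {t : ℝ → ℝ}
    (ht : ∀ u, |t u| ≤ 1) {l : Filter ℝ} (hl : l ≤ Filter.cocompact ℝ) :
    Tendsto (fun x : ℝ => x^k * Real.exp (-b*x^2) * t x * c) l (𝓝 0) := by
  have h0 : Tendsto (fun x : ℝ => |x|^k * Real.exp (-b*x^2) * |c|) l (𝓝 0) := by
    have := ((tendsto_rpow_abs_mul_exp_neg_mul_sq_cocompact hb k).mono_left hl).mul_const |c|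
    simpa [Real.rpow_natCast] using this
  apply squeeze_zero_norm _ h0
  intro x
  have h1 : |t x| ≤ 1 := ht x
  have h2 : (0:ℝ) ≤ |x|^k * Real.exp (-b*x^2) := by positivity
  calc ‖x^k * Real.exp (-b*x^2) * t x * c‖
      = |x|^k * Real.exp (-b*x^2) * |t x| * |c| := by
        simp [Real.norm_eq_abs, abs_mul, abs_pow, Real.abs_exp]
    _ ≤ |x|^k * Real.exp (-b*x^2) * 1 * |c| := by gcongr
    _ = |x|^k * Real.exp (-b*x^2) * |c| := by ring

lemma integral_eq_zero_of_deriv (F f : ℝ → ℝ) (hd : ∀ x, HasDerivAt F (f x) x)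
    (hi : Integrable f) (ht : Tendsto F atTop (𝓝 0)) (hb : Tendsto F atBot (𝓝 0)) :
    ∫ x, f x = 0 := by
  have h1 := integral_Iic_of_hasDerivAt_of_tendsto' (a := (0:ℝ)) (fun x _ => hd x)
    hi.integrableOn hb
  have h2 := integral_Ioi_of_hasDerivAt_of_tendsto' (a := (0:ℝ)) (fun x _ => hd x)
    hi.integrableOn ht
  rw [← intervalIntegral.integral_Iic_add_Ioi (b := (0:ℝ)) hi.integrableOn hi.integrableOn, h1, h2]
  ring

lemma gauss_cos (y : ℝ) : ∫ x : ℝ, Real.exp (-(1/2)*x^2) * Real.cos (x*y)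
    = Real.sqrt (2*π) * Real.exp (-(1/2)*y^2) := by
  have key := fourierIntegral_gaussian (b := (1/2:ℂ)) (by norm_num) (y:ℂ)
  have hint : Integrable (fun x : ℝ =>
      Complex.exp (Complex.I*(y:ℂ)*(x:ℂ)) * Complex.exp (-(1/2:ℂ)*(x:ℂ)^2)) := by
    have h := integrable_cexp_quadratic (b := (1/2:ℂ)) (by norm_num) (Complex.I*(y:ℂ)) 0
    exact h.congr (ae_of_all _ fun x => by
      beta_reduce; rw [← Complex.exp_add]; congr 1; ring)
  have hre := integral_re hint
  have hpt : ∀ x : ℝ, (Complex.exp (Complex.I*(y:ℂ)*(x:ℂ)) * Complex.exp (-(1/2:ℂ)*(x:ℂ)^2)).re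
      = Real.exp (-(1/2)*x^2) * Real.cos (x*y) := by
    intro x
    rw [show Complex.I*(y:ℂ)*(x:ℂ) = ((x*y : ℝ):ℂ)*Complex.I by push_cast; ring,
      show (-(1/2:ℂ)*(x:ℂ)^2) = ((-(1/2)*x^2 : ℝ):ℂ) by push_cast; ring,
      ← Complex.ofReal_exp, Complex.exp_mul_I]
    simp only [Complex.mul_re, Complex.add_re, Complex.add_im, Complex.mul_im,
      Complex.cos_ofReal_re, Complex.sin_ofReal_re, Complex.cos_ofReal_im,
      Complex.sin_ofReal_im, Complex.I_re, Complex.I_im, Complex.ofReal_re, Complex.ofReal_im]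
    ring
  have hr : ((π:ℂ)/(1/2:ℂ))^(1/2:ℂ) = ((Real.sqrt (2*π) : ℝ):ℂ) := by
    rw [show ((π:ℂ)/(1/2:ℂ)) = ((2*π : ℝ):ℂ) by push_cast; ring,
      show ((1/2 : ℂ)) = (((1/2:ℝ)):ℂ) by norm_num,
      ← Complex.ofReal_cpow (by positivity), Real.sqrt_eq_rpow]
  have hr2 : Complex.exp (-(y:ℂ)^2/(4*(1/2:ℂ))) = ((Real.exp (-(1/2)*y^2) : ℝ):ℂ) := by
    rw [show -(y:ℂ)^2/(4*(1/2:ℂ)) = ((-(1/2)*y^2 : ℝ):ℂ) by push_cast; ring,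
      Complex.ofReal_exp]
  calc ∫ x : ℝ, Real.exp (-(1/2)*x^2) * Real.cos (x*y)
      = ∫ x : ℝ, (Complex.exp (Complex.I*(y:ℂ)*(x:ℂ)) * Complex.exp (-(1/2:ℂ)*(x:ℂ)^2)).re := by
        congr 1; funext x; exact (hpt x).symm
    _ = (∫ x : ℝ, Complex.exp (Complex.I*(y:ℂ)*(x:ℂ)) * Complex.exp (-(1/2:ℂ)*(x:ℂ)^2)).re := by
        simpa using hre
    _ = Real.sqrt (2*π) * Real.exp (-(1/2)*y^2) := by
        rw [key, hr, hr2, ← Complex.ofReal_mul, Complex.ofReal_re]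

def Af (x y : ℝ) : ℝ := x * (-4545+12360*y^2-4680*y^4+512*y^6-16*y^8) + x^3 * (-1440+2200*y^2-400*y^4+16*y^6) + x^5 * (-408+224*y^2-16*y^4) + x^7 * (16+16*y^2) + x^9 * ((-16):ℝ)
def Bf (x y : ℝ) : ℝ := (16065*y-19320*y^3+5608*y^5-544*y^7+16*y^9) + x^2 * (5760*y-3480*y^3+464*y^5-16*y^7) + x^4 * (1080*y-320*y^3+16*y^5) + x^6 * (112*y-16*y^3) + x^8 * (16*y)

noncomputable def Fi (y : ℝ) : ℝ → ℝ := fun x =>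
  Real.exp (-(1/2)*x^2) * (Af x y * Real.cos (x*y) + Bf x y * Real.sin (x*y))

lemma hasDerivAt_Fi (y x : ℝ) :
    HasDerivAt (Fi y) (Real.exp (-(1/2)*x^2) * (Qf x - Rf y) * Real.cos (x*y)) x := by
  have he : HasDerivAt (fun x : ℝ => Real.exp (-(1/2)*x^2))
      (Real.exp (-(1/2)*x^2) * (-(1/2) * ((2:ℕ) * x ^ (2-1)))) x :=
    ((hasDerivAt_pow 2 x).const_mul (-(1/2):ℝ)).exp
  have hcos : HasDerivAt (fun x : ℝ => Real.cos (x*y)) (-Real.sin (x*y) * (1*y)) x :=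
    ((hasDerivAt_id x).mul_const y).cos
  have hsin : HasDerivAt (fun x : ℝ => Real.sin (x*y)) (Real.cos (x*y) * (1*y)) x :=
    ((hasDerivAt_id x).mul_const y).sin
  have hA : HasDerivAt (fun x : ℝ => Af x y) _ x := ((((((hasDerivAt_id x).mul_const ((-4545+12360*y^2-4680*y^4+512*y^6-16*y^8))).add ((hasDerivAt_pow 3 x).mul_const ((-1440+2200*y^2-400*y^4+16*y^6)))).add ((hasDerivAt_pow 5 x).mul_const ((-408+224*y^2-16*y^4)))).add ((hasDerivAt_pow 7 x).mul_const ((16+16*y^2)))).add ((hasDerivAt_pow 9 x).mul_const (((-16):ℝ))))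
  have hB : HasDerivAt (fun x : ℝ => Bf x y) _ x := (((((hasDerivAt_const x ((16065*y-19320*y^3+5608*y^5-544*y^7+16*y^9))).add ((hasDerivAt_pow 2 x).mul_const ((5760*y-3480*y^3+464*y^5-16*y^7)))).add ((hasDerivAt_pow 4 x).mul_const ((1080*y-320*y^3+16*y^5)))).add ((hasDerivAt_pow 6 x).mul_const ((112*y-16*y^3)))).add ((hasDerivAt_pow 8 x).mul_const ((16*y))))
  have H := he.mul ((hA.mul hcos).add (hB.mul hsin))
  refine H.congr_deriv ?_
  simp only [Qf, Rf, Af, Bf, Pi.mul_apply, Pi.add_apply]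
  push_cast
  ring

lemma res_int (y : ℝ) :
    Integrable (fun x : ℝ => Real.exp (-(1/2)*x^2) * (Qf x - Rf y) * Real.cos (x*y)) := by
  have hb : (0:ℝ) < 1/2 := by norm_num
  have ccos : Continuous fun u:ℝ => Real.cos (u*y) := by fun_prop
  have tcos : ∀ u:ℝ, |Real.cos (u*y)| ≤ 1 := fun u => Real.abs_cos_le_one _
  have h : (fun x : ℝ => Real.exp (-(1/2)*x^2) * (Qf x - Rf y) * Real.cos (x*y))
      = fun x : ℝ => x^10 * Real.exp (-(1/2)*x^2) * Real.cos (x*y) * 16 + x^8 * Real.exp (-(1/2)*x^2) * Real.cos (x*y) * (-160) + x^6 * Real.exp (-(1/2)*x^2) * Real.cos (x*y) * 520 + x^4 * Real.exp (-(1/2)*x^2) * Real.cos (x*y) * (-600) + x^2 * Real.exp (-(1/2)*x^2) * Real.cos (x*y) * 225 + x^0 * Real.exp (-(1/2)*x^2) * Real.cos (x*y) * (-(Rf y)) := by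
    funext x; simp only [Qf, Rf]; ring
  rw [h]
  exact ((((((term_integrable 16 hb 10 ccos tcos).add (term_integrable (-160) hb 8 ccos tcos)).add (term_integrable 520 hb 6 ccos tcos)).add (term_integrable (-600) hb 4 ccos tcos)).add (term_integrable 225 hb 2 ccos tcos)).add (term_integrable (-(Rf y)) hb 0 ccos tcos))

lemma inner_zero (y : ℝ) :
    ∫ x : ℝ, Real.exp (-(1/2)*x^2) * (Qf x - Rf y) * Real.cos (x*y) = 0 := by
  have hb : (0:ℝ) < 1/2 := by norm_num
  have tcos : ∀ u:ℝ, |Real.cos (u*y)| ≤ 1 := fun u => Real.abs_cos_le_one _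
  have tsin : ∀ u:ℝ, |Real.sin (u*y)| ≤ 1 := fun u => Real.abs_sin_le_one _
  have hFeq : Fi y = fun x : ℝ => x^1 * Real.exp (-(1/2)*x^2) * Real.cos (x*y) * (-4545+12360*y^2-4680*y^4+512*y^6-16*y^8) + x^3 * Real.exp (-(1/2)*x^2) * Real.cos (x*y) * (-1440+2200*y^2-400*y^4+16*y^6) + x^5 * Real.exp (-(1/2)*x^2) * Real.cos (x*y) * (-408+224*y^2-16*y^4) + x^7 * Real.exp (-(1/2)*x^2) * Real.cos (x*y) * (16+16*y^2) + x^9 * Real.exp (-(1/2)*x^2) * Real.cos (x*y) * ((-16):ℝ) + x^0 * Real.exp (-(1/2)*x^2) * Real.sin (x*y) * (16065*y-19320*y^3+5608*y^5-544*y^7+16*y^9) + x^2 * Real.exp (-(1/2)*x^2) * Real.sin (x*y) * (5760*y-3480*y^3+464*y^5-16*y^7) + x^4 * Real.exp (-(1/2)*x^2) * Real.sin (x*y) * (1080*y-320*y^3+16*y^5) + x^6 * Real.exp (-(1/2)*x^2) * Real.sin (x*y) * (112*y-16*y^3) + x^8 * Real.exp (-(1/2)*x^2) * Real.sin (x*y)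 * (16*y) := by
    funext x; simp only [Fi, Af, Bf]; ring
  have hten : ∀ l : Filter ℝ, l ≤ Filter.cocompact ℝ → Tendsto (Fi y) l (𝓝 0) := by
    intro l hl
    rw [hFeq]
    have := ((((((((((term_tendsto ((-4545+12360*y^2-4680*y^4+512*y^6-16*y^8)) hb 1 tcos hl).add (term_tendsto ((-1440+2200*y^2-400*y^4+16*y^6)) hb 3 tcos hl)).add (term_tendsto ((-408+224*y^2-16*y^4)) hb 5 tcos hl)).add (term_tendsto ((16+16*y^2)) hb 7 tcos hl)).add (term_tendsto (((-16):ℝ)) hb 9 tcos hl)).add (term_tendsto ((16065*y-19320*y^3+5608*y^5-544*y^7+16*y^9)) hb 0 tsin hl)).add (term_tendsto ((5760*y-3480*y^3+464*y^5-16*y^7)) hb 2 tsin hl)).add (term_tendsto ((1080*y-320*y^3+16*y^5)) hb 4 tsin hl)).add (term_tendsto ((112*y-16*y^3)) hb 6 tsin hl)).add (term_tendsto ((16*y)) hb 8 tsin hl))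
    simpa using this
  exact integral_eq_zero_of_deriv (Fi y) _ (fun x => hasDerivAt_Fi y x) (res_int y)
    (hten _ _root_.atTop_le_cocompact) (hten _ _root_.atBot_le_cocompact)

lemma inner_eq (y : ℝ) : ∫ x : ℝ, Real.exp (-(1/2)*x^2) * Qf x * Real.cos (x*y)
    = Real.sqrt (2*π) * Real.exp (-(1/2)*y^2) * Rf y := by
  have hb : (0:ℝ) < 1/2 := by norm_num
  have ccos : Continuous fun u:ℝ => Real.cos (u*y) := by fun_prop
  have tcos : ∀ u:ℝ, |Real.cos (u*y)| ≤ 1 := fun u => Real.abs_cos_le_one _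
  have intgc : Integrable (fun x : ℝ => Real.exp (-(1/2)*x^2) * Real.cos (x*y)) :=
    (term_integrable 1 hb 0 ccos tcos).congr (ae_of_all _ fun x => by ring)
  have hsplit : (fun x : ℝ => Real.exp (-(1/2)*x^2) * Qf x * Real.cos (x*y))
      = fun x : ℝ => (Real.exp (-(1/2)*x^2) * (Qf x - Rf y) * Real.cos (x*y))
        + Rf y * (Real.exp (-(1/2)*x^2) * Real.cos (x*y)) := by
    funext x; ring
  rw [hsplit, integral_add (res_int y) (intgc.const_mul (Rf y)), inner_zero y,
    integral_const_mul, gauss_cos]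
  ring

noncomputable def Fo : ℝ → ℝ := fun y => Real.exp (-1*y^2) * (y * ((-176400):ℝ) + y^3 * ((223275):ℝ) + y^5 * ((-1735215):ℝ) + y^7 * ((3049710):ℝ) + y^9 * ((-2798420):ℝ) + y^11 * ((1391080):ℝ) + y^13 * ((-387280):ℝ) + y^15 * ((59296):ℝ) + y^17 * ((-4544):ℝ) + y^19 * ((128):ℝ))

lemma hasDerivAt_Fo (y : ℝ) :
    HasDerivAt Fo (Real.exp (-1*y^2) * (Qf y * Rf y - 176400)) y := by
  have he : HasDerivAt (fun y : ℝ => Real.exp (-1*y^2))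
      (Real.exp (-1*y^2) * (-1 * ((2:ℕ) * y ^ (2-1)))) y :=
    ((hasDerivAt_pow 2 y).const_mul (-1:ℝ)).exp
  have hD : HasDerivAt (fun y : ℝ => y * ((-176400):ℝ) + y^3 * ((223275):ℝ) + y^5 * ((-1735215):ℝ) + y^7 * ((3049710):ℝ) + y^9 * ((-2798420):ℝ) + y^11 * ((1391080):ℝ) + y^13 * ((-387280):ℝ) + y^15 * ((59296):ℝ) + y^17 * ((-4544):ℝ) + y^19 * ((128):ℝ)) _ y := (((((((((((hasDerivAt_id y).mul_const (-176400)).add ((hasDerivAt_pow 3 y).mul_const (223275))).add ((hasDerivAt_pow 5 y).mul_const (-1735215))).add ((hasDerivAt_pow 7 y).mul_const (3049710))).add ((hasDerivAt_pow 9 y).mul_const (-2798420))).add ((hasDerivAt_pow 11 y).mul_const (1391080))).add ((hasDerivAt_pow 13 y).mul_const (-387280))).add ((hasDerivAt_pow 15 y).mul_const (59296))).add ((hasDerivAt_pow 17 y).mul_const (-4544))).add ((hasDerivAt_pow 19 y).mul_const (128)))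
  have H := he.mul hD
  refine H.congr_deriv ?_
  simp only [Qf, Rf, Af, Bf, Pi.mul_apply, Pi.add_apply]
  push_cast
  ring

lemma outer_res_int :
    Integrable (fun y : ℝ => Real.exp (-1*y^2) * (Qf y * Rf y - 176400)) := by
  have h1 : (0:ℝ) < 1 := one_pos
  have tone : ∀ u:ℝ, |(1:ℝ)| ≤ 1 := fun u => by norm_num
  have h : (fun y : ℝ => Real.exp (-1*y^2) * (Qf y * Rf y - 176400))
      = fun y : ℝ => y^0 * Real.exp (-1*y^2) * (1:ℝ) * ((-176400):ℝ) + y^2 * Real.exp (-1*y^2) * (1:ℝ) * ((1022625):ℝ) + y^4 * Real.exp (-1*y^2) * (1:ℝ) * ((-9122625):ℝ) + y^6 * Real.exp (-1*y^2) * (1:ℝ) * ((24818400):ℝ) + y^8 * Real.exp (-1*y^2) * (1:ℝ) * ((-31285200):ℝ) + y^10 * Real.exp (-1*y^2) * (1:ℝ) * ((20898720):ℝ) + y^12 * Real.exp (-1*y^2) * (1:ℝ) * ((-7816800):ℝ) + y^14 * Real.exp (-1*y^2) * (1:ℝ) * ((1664000):ℝ) + y^16 * Real.exp (-1*y^2)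 * (1:ℝ) * ((-195840):ℝ) + y^18 * Real.exp (-1*y^2) * (1:ℝ) * ((11520):ℝ) + y^20 * Real.exp (-1*y^2) * (1:ℝ) * ((-256):ℝ) := by
    funext y; simp only [Qf, Rf]; ring
  rw [h]
  exact (((((((((((term_integrable ((-176400):ℝ) h1 0 continuous_const tone).add (term_integrable ((1022625):ℝ) h1 2 continuous_const tone)).add (term_integrable ((-9122625):ℝ) h1 4 continuous_const tone)).add (term_integrable ((24818400):ℝ) h1 6 continuous_const tone)).add (term_integrable ((-31285200):ℝ) h1 8 continuous_const tone)).add (term_integrable ((20898720):ℝ) h1 10 continuous_const tone)).add (term_integrable ((-7816800):ℝ) h1 12 continuous_const tone)).add (term_integrable ((1664000):ℝ) h1 14 continuous_const tone)).add (term_integrable ((-195840):ℝ) h1 16 continuous_const tone)).add (term_integrable ((11520):ℝ) h1 18 continuous_const tone)).add (term_integrable ((-256):ℝ) h1 20 continuous_const tone))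

lemma outer_zero :
    ∫ y : ℝ, Real.exp (-1*y^2) * (Qf y * Rf y - 176400) = 0 := by
  have h1 : (0:ℝ) < 1 := one_pos
  have tone : ∀ u:ℝ, |(1:ℝ)| ≤ 1 := fun u => by norm_num
  have hFeq : Fo = fun y : ℝ => y^1 * Real.exp (-1*y^2) * (1:ℝ) * ((-176400):ℝ) + y^3 * Real.exp (-1*y^2) * (1:ℝ) * ((223275):ℝ) + y^5 * Real.exp (-1*y^2) * (1:ℝ) * ((-1735215):ℝ) + y^7 * Real.exp (-1*y^2) * (1:ℝ) * ((3049710):ℝ) + y^9 * Real.exp (-1*y^2) * (1:ℝ) * ((-2798420):ℝ) + y^11 * Real.exp (-1*y^2) * (1:ℝ) * ((1391080):ℝ) + y^13 * Real.exp (-1*y^2) * (1:ℝ) * ((-387280):ℝ) + y^15 * Real.exp (-1*y^2) * (1:ℝ) * ((59296):ℝ) + y^17 * Real.exp (-1*y^2) * (1:ℝ) * ((-4544):ℝ) + y^19 * Real.exp (-1*y^2) * (1:ℝ) * ((128):ℝ) := by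
    funext y; simp only [Fo]; ring
  have hten : ∀ l : Filter ℝ, l ≤ Filter.cocompact ℝ → Tendsto Fo l (𝓝 0) := by
    intro l hl
    rw [hFeq]
    have := ((((((((((term_tendsto ((((-176400):ℝ)):ℝ) h1 1 tone hl).add (term_tendsto ((((223275):ℝ)):ℝ) h1 3 tone hl)).add (term_tendsto ((((-1735215):ℝ)):ℝ) h1 5 tone hl)).add (term_tendsto ((((3049710):ℝ)):ℝ) h1 7 tone hl)).add (term_tendsto ((((-2798420):ℝ)):ℝ) h1 9 tone hl)).add (term_tendsto ((((1391080):ℝ)):ℝ) h1 11 tone hl)).add (term_tendsto ((((-387280):ℝ)):ℝ) h1 13 tone hl)).add (term_tendsto ((((59296):ℝ)):ℝ) h1 15 tone hl)).add (term_tendsto ((((-4544):ℝ)):ℝ) h1 17 tone hl)).add (term_tendsto ((((128):ℝ)):ℝ) h1 19 tone hl))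
    simpa using this
  exact integral_eq_zero_of_deriv Fo _ hasDerivAt_Fo outer_res_int
    (hten _ _root_.atTop_le_cocompact) (hten _ _root_.atBot_le_cocompact)

lemma outer_eq : ∫ y : ℝ, Real.exp (-1*y^2) * (Qf y * Rf y) = 176400 * Real.sqrt π := by
  have hsplit : (fun y : ℝ => Real.exp (-1*y^2) * (Qf y * Rf y))
      = fun y : ℝ => (Real.exp (-1*y^2) * (Qf y * Rf y - 176400))
        + 176400 * Real.exp (-1*y^2) := by
    funext y; ring
  rw [hsplit, integral_add outer_res_int ((integrable_exp_neg_mul_sq one_pos).const_mul _),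
    outer_zero, integral_const_mul, integral_gaussian]
  norm_num
lemma hh5 (u : ℝ) : h5 u ^ 2 = Qf u / (60 * Real.sqrt π) := by
  have h4 : (Real.pi ^ ((1:ℝ)/4))^(2:ℕ) = Real.sqrt π := by
    rw [← Real.rpow_natCast (Real.pi ^ ((1:ℝ)/4)) 2, ← Real.rpow_mul Real.pi_pos.le,
      Real.sqrt_eq_rpow]
    norm_num
  have h15 : Real.sqrt 15 ^ (2:ℕ) = 15 := Real.sq_sqrt (by norm_num)
  simp only [h5, Qf, div_pow, mul_pow, h4, h15]
  rw [show ((2:ℝ)^(2:ℕ) * Real.sqrt π * 15) = 60 * Real.sqrt π by ring]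
  congr 1
  ring

theorem stmt_2 :
    ∫ y : ℝ, ∫ x : ℝ,
      Real.exp (-(x ^ 2 + y ^ 2) / 2) * h5 x ^ 2 * h5 y ^ 2 * Real.cos (x * y)
    = 49 * Real.sqrt 2 := by
  have hpi : Real.sqrt π * Real.sqrt π = π := Real.mul_self_sqrt Real.pi_pos.le
  have hs : Real.sqrt π ≠ 0 := ne_of_gt (Real.sqrt_pos.mpr Real.pi_pos)
  have hinner : ∀ y : ℝ, (∫ x : ℝ, Real.exp (-(x ^ 2 + y ^ 2) / 2) * h5 x ^ 2 * h5 y ^ 2 * Real.cos (x * y))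
      = (Real.sqrt (2*π)/(3600*π)) * (Real.exp (-1*y^2) * (Qf y * Rf y)) := by
    intro y
    have step1 : (fun x : ℝ => Real.exp (-(x ^ 2 + y ^ 2) / 2) * h5 x ^ 2 * h5 y ^ 2 * Real.cos (x * y))
        = fun x : ℝ => (Real.exp (-(1/2)*y^2) * h5 y ^ 2 / (60*Real.sqrt π)) *
            (Real.exp (-(1/2)*x^2) * Qf x * Real.cos (x*y)) := by
      funext x
      rw [show -(x^2+y^2)/2 = (-(1/2)*x^2) + (-(1/2)*y^2) by ring, Real.exp_add, hh5 x]
      ring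
    rw [step1, integral_const_mul, inner_eq y, hh5 y]
    rw [show Real.exp (-1*y^2) = Real.exp (-(1/2)*y^2) * Real.exp (-(1/2)*y^2) by
      rw [← Real.exp_add]; ring_nf]
    field_simp
    linear_combination (-(Qf y * Rf y * 3600)) * hpi
  calc ∫ y : ℝ, ∫ x : ℝ, Real.exp (-(x ^ 2 + y ^ 2) / 2) * h5 x ^ 2 * h5 y ^ 2 * Real.cos (x * y)
      = ∫ y : ℝ, (Real.sqrt (2*π)/(3600*π)) * (Real.exp (-1*y^2) * (Qf y * Rf y)) := by
        congr 1; funext y; exact hinner y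
    _ = (Real.sqrt (2*π)/(3600*π)) * (176400 * Real.sqrt π) := by
        rw [integral_const_mul, outer_eq]
    _ = 49 * Real.sqrt 2 := by
        rw [Real.sqrt_mul (by norm_num : (0:ℝ) ≤ 2)]
        field_simp
        linear_combination 176400 * hpi
end

section
/- For every real $z$ with $0 < z < 1$, $\int_{\mathbb{R}}\int_{\mathbb{R}} \mathrm{sign}(u)\,\mathrm{sign}(v)\, e^{-u^2-v^2+2zuv}\,du\,dv = \frac{2\arcsin(z)}{\sqrt{1-z^2}}$. -/
open MeasureTheory Real Set Filter

noncomputable def auxF (x : ℝ) : ℝ := ∫ t in (0:ℝ)..x, Real.exp (-t^2)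

lemma auxF_hasDerivAt (x : ℝ) : HasDerivAt auxF (Real.exp (-x^2)) x :=
  ((Real.continuous_exp.comp (by continuity : Continuous fun t : ℝ => -t^2)).integral_hasStrictDerivAt 0 x).hasDerivAt

lemma auxF_zero : auxF 0 = 0 := intervalIntegral.integral_same

lemma auxF_neg (x : ℝ) : auxF (-x) = - auxF x := by
  unfold auxF
  rw [show (0:ℝ) = -0 by ring, ← intervalIntegral.integral_comp_neg (fun t => Real.exp (-t^2))]
  rw [intervalIntegral.integral_symm]
  simp

lemma auxF_abs_le (x : ℝ) : |auxF x| ≤ |x| := by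
  have := intervalIntegral.norm_integral_le_of_norm_le_const
    (C := 1) (f := fun t : ℝ => Real.exp (-t^2)) (a := 0) (b := x) ?_
  · simpa [auxF] using this
  · intro t ht
    simp only [Real.norm_eq_abs, abs_of_pos (Real.exp_pos _)]
    exact Real.exp_le_one_iff.2 (by nlinarith [sq_nonneg t])

lemma gauss_shift_integrable (c : ℝ) : Integrable (fun u : ℝ => Real.exp (-(u - c)^2)) := by
  have h := (integrable_exp_neg_mul_sq (one_pos)).comp_sub_right c
  simpa using h

lemma gauss_integrable : Integrable (fun t : ℝ => Real.exp (-t^2)) := by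
  simpa using integrable_exp_neg_mul_sq one_pos

lemma measurable_real_sign : Measurable Real.sign := by
  have h : Real.sign = fun x : ℝ => if x < 0 then (-1:ℝ) else if 0 < x then 1 else 0 := by
    funext x; rfl
  rw [h]
  exact Measurable.ite measurableSet_Iio measurable_const
    (Measurable.ite measurableSet_Ioi measurable_const measurable_const)

lemma abs_real_sign_le (x : ℝ) : |Real.sign x| ≤ 1 := by
  rcases Real.sign_apply_eq x with h|h|h <;> rw [h] <;> norm_num

lemma sign_gauss_integrable (c : ℝ) :
    Integrable (fun t : ℝ => Real.sign (t + c) * Real.exp (-t^2)) := by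
  apply (gauss_integrable.mono' ?_ ?_)
  · apply Measurable.aestronglyMeasurable
    exact (measurable_real_sign.comp (measurable_id.add_const c)).mul (by measurability)
  · filter_upwards with t
    rw [norm_mul, Real.norm_eq_abs, Real.norm_eq_abs, abs_of_pos (Real.exp_pos _)]
    calc |Real.sign (t + c)| * Real.exp (-t^2) ≤ 1 * Real.exp (-t^2) :=
          mul_le_mul_of_nonneg_right (abs_real_sign_le _) (Real.exp_pos _).le
      _ = Real.exp (-t^2) := one_mul _

lemma Ioi_sub_Ioi (c : ℝ) :
    (∫ t in Ioi (-c), Real.exp (-t^2)) - ∫ t in Ioi c, Real.exp (-t^2) = 2 * auxF c := by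
  have hint : ∀ a : ℝ, (∫ t in Ioi a, Real.exp (-t^2))
      = (∫ t : ℝ, Real.exp (-t^2)) - ∫ t in Iic a, Real.exp (-t^2) := by
    intro a
    rw [← intervalIntegral.integral_Iic_add_Ioi gauss_integrable.integrableOn gauss_integrable.integrableOn]
    ring
  rw [hint, hint]
  have h2 : (∫ t in Iic c, Real.exp (-t^2)) - ∫ t in Iic (-c), Real.exp (-t^2)
      = ∫ t in (-c)..c, Real.exp (-t^2) :=
    intervalIntegral.integral_Iic_sub_Iic gauss_integrable.integrableOn gauss_integrable.integrableOn
  have h3 : (∫ t in (-c)..c, Real.exp (-t^2)) = 2 * auxF c := by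
    have hadd : (∫ t in (-c)..(0:ℝ), Real.exp (-t^2)) + ∫ t in (0:ℝ)..c, Real.exp (-t^2)
        = ∫ t in (-c)..c, Real.exp (-t^2) :=
      intervalIntegral.integral_add_adjacent_intervals
        gauss_integrable.intervalIntegrable gauss_integrable.intervalIntegrable
    have hneg : (∫ t in (-c)..(0:ℝ), Real.exp (-t^2)) = auxF c := by
      rw [show (0:ℝ) = -0 by ring, ← intervalIntegral.integral_comp_neg (fun t => Real.exp (-t^2))]
      simp [auxF]
    rw [← hadd, hneg, auxF]; ring
  linarith [h2, h3]

lemma Iic_gauss_eq (c : ℝ) :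
    (∫ t in Iic (-c), Real.exp (-t^2)) = ∫ t in Ioi c, Real.exp (-t^2) := by
  rw [← integral_comp_neg_Ioi]
  simp

lemma inner_sign_integral (c : ℝ) :
    (∫ u : ℝ, Real.sign u * Real.exp (-(u - c)^2)) = 2 * auxF c := by
  have hsub : (∫ u : ℝ, Real.sign u * Real.exp (-(u - c)^2))
      = ∫ t : ℝ, Real.sign (t + c) * Real.exp (-t^2) := by
    rw [← MeasureTheory.integral_add_right_eq_self (fun u => Real.sign u * Real.exp (-(u - c)^2)) c]
    simp
  rw [hsub]
  rw [← intervalIntegral.integral_Iic_add_Ioi (sign_gauss_integrable c).integrableOn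
    (sign_gauss_integrable c).integrableOn]
  have hIoi : (∫ t in Ioi (-c), Real.sign (t + c) * Real.exp (-t^2))
      = ∫ t in Ioi (-c), Real.exp (-t^2) := by
    apply setIntegral_congr_fun measurableSet_Ioi
    intro t ht
    simp only []
    rw [Real.sign_of_pos (by simp only [mem_Ioi] at ht; linarith), one_mul]
  have hIic : (∫ t in Iic (-c), Real.sign (t + c) * Real.exp (-t^2))
      = - ∫ t in Iic (-c), Real.exp (-t^2) := by
    rw [← integral_neg]
    apply setIntegral_congr_ae measurableSet_Iic
    filter_upwards [compl_mem_ae_iff.2 (volume_singleton (a := -c))] with t htne hmem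
    have ht : t < -c := lt_of_le_of_ne hmem (by simpa using htne)
    show Real.sign (t + c) * Real.exp (-t^2) = -Real.exp (-t^2)
    rw [Real.sign_of_neg (by linarith), neg_one_mul]
  rw [hIoi, hIic, Iic_gauss_eq]
  linarith [Ioi_sub_Ioi c]

lemma inner_full (z v : ℝ) :
    (∫ u : ℝ, Real.sign u * Real.sign v * Real.exp (-u^2 - v^2 + 2*z*u*v))
      = Real.sign v * (Real.exp (-(1 - z^2) * v^2) * (2 * auxF (z*v))) := by
  have h1 : ∀ u : ℝ, Real.sign u * Real.sign v * Real.exp (-u^2 - v^2 + 2*z*u*v)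
      = Real.sign v * ((Real.sign u * Real.exp (-(u - z*v)^2)) * Real.exp (-(1 - z^2) * v^2)) := by
    intro u
    rw [show -u^2 - v^2 + 2*z*u*v = (-(u - z*v)^2) + (-(1 - z^2) * v^2) by ring, Real.exp_add]
    ring
  simp_rw [h1]
  rw [integral_const_mul, integral_mul_const, inner_sign_integral]
  ring

lemma abs_mul_gauss_integrable {a : ℝ} (ha : 0 < a) :
    Integrable (fun v : ℝ => |v| * Real.exp (-a * v^2)) := by
  have h := (integrable_mul_exp_neg_mul_sq ha).abs
  apply h.congr
  filter_upwards with v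
  rw [abs_mul, abs_of_pos (Real.exp_pos _)]

lemma auxF_cont : Continuous auxF := by
  have h : Differentiable ℝ auxF := fun x => (auxF_hasDerivAt x).differentiableAt
  exact h.continuous

lemma outer_integrable {a : ℝ} (ha : 0 < a) (z : ℝ) :
    Integrable (fun v : ℝ => Real.sign v * (Real.exp (-a * v^2) * (2 * auxF (z*v)))) := by
  apply ((abs_mul_gauss_integrable ha).const_mul (2 * |z|)).mono'
  · apply Measurable.aestronglyMeasurable
    exact measurable_real_sign.mul ((by measurability : Measurable fun v : ℝ => Real.exp (-a * v^2)).mul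
      ((measurable_const.mul (auxF_cont.measurable.comp (measurable_const.mul measurable_id)))))
  · filter_upwards with v
    rw [norm_mul, norm_mul, norm_mul, Real.norm_eq_abs, Real.norm_eq_abs, Real.norm_eq_abs,
      Real.norm_eq_abs, abs_of_pos (Real.exp_pos _)]
    have h1 : |auxF (z * v)| ≤ |z| * |v| := by
      have := auxF_abs_le (z * v); rwa [abs_mul] at this
    have h2 : |Real.sign v| ≤ 1 := abs_real_sign_le v
    have h3 : (0:ℝ) < Real.exp (-a * v^2) := Real.exp_pos _
    have h4 : |(2:ℝ)| = 2 := by norm_num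
    rw [h4]
    calc |Real.sign v| * (Real.exp (-a*v^2) * (2 * |auxF (z*v)|))
        ≤ 1 * (Real.exp (-a*v^2) * (2 * (|z| * |v|))) := by
          apply mul_le_mul h2 ?_ (by positivity) (by norm_num)
          apply mul_le_mul_of_nonneg_left ?_ (Real.exp_pos _).le
          exact mul_le_mul_of_nonneg_left h1 (by norm_num)
      _ = 2 * |z| * (|v| * Real.exp (-a*v^2)) := by ring

lemma even_integral {g : ℝ → ℝ} (hg : Integrable g) (he : ∀ v, g (-v) = g v) :
    (∫ v : ℝ, g v) = 2 * ∫ v in Ioi (0:ℝ), g v := by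
  rw [← intervalIntegral.integral_Iic_add_Ioi hg.integrableOn hg.integrableOn (b := (0:ℝ))]
  have h1 : (∫ v in Iic (0:ℝ), g v) = ∫ v in Ioi (0:ℝ), g v := by
    have h := integral_comp_neg_Ioi (0:ℝ) g
    simp only [neg_zero] at h
    rw [← h]
    exact setIntegral_congr_fun measurableSet_Ioi (fun v _ => he v)
  rw [h1]; ring

lemma int_v_exp {c : ℝ} (hc : 0 < c) :
    (∫ v in Ioi (0:ℝ), v * Real.exp (-c * v^2)) = 1 / (2*c) := by
  have hderiv : ∀ x : ℝ, HasDerivAt (fun x : ℝ => -Real.exp (-c * x^2) / (2*c))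
      (x * Real.exp (-c * x^2)) x := by
    intro x
    have h1 : HasDerivAt (fun x : ℝ => -c * x^2) (-c * (2*x)) x := by
      simpa using ((hasDerivAt_pow 2 x).const_mul (-c))
    have h2 := (h1.exp).neg.div_const (2*c)
    refine h2.congr_deriv ?_
    field_simp
  have htend : Tendsto (fun x : ℝ => -Real.exp (-c * x^2) / (2*c)) atTop (nhds 0) := by
    have h1 : Tendsto (fun x : ℝ => -c * x^2) atTop atBot :=
      Tendsto.const_mul_atTop_of_neg (by linarith : -c < 0)
        (tendsto_pow_atTop (by norm_num : 2 ≠ 0))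
    have h2 : Tendsto (fun x : ℝ => Real.exp (-c * x^2)) atTop (nhds 0) :=
      Real.tendsto_exp_atBot.comp h1
    have h3 := (h2.neg).div_const (2*c)
    simpa using h3
  have h := MeasureTheory.integral_Ioi_of_hasDerivAt_of_tendsto
    (f := fun x : ℝ => -Real.exp (-c * x^2) / (2*c))
    (f' := fun x : ℝ => x * Real.exp (-c * x^2)) (a := 0) (m := 0)
    (hderiv 0).continuousAt.continuousWithinAt
    (fun x _ => hderiv x)
    ((integrable_mul_exp_neg_mul_sq hc).integrableOn)
    htend
  rw [h]
  have : c ≠ 0 := hc.ne'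
  field_simp
  simp

lemma auxG_hasDerivAt {a : ℝ} (ha : 0 < a) (b : ℝ) :
    HasDerivAt (fun b : ℝ => ∫ v in Ioi (0:ℝ), Real.exp (-a * v^2) * auxF (b * v))
      (1 / (2 * (a + b^2))) b := by
  have contF : ∀ x : ℝ, Continuous (fun v : ℝ => Real.exp (-a * v^2) * auxF (x * v)) := by
    intro x
    exact (Real.continuous_exp.comp (by continuity)).mul
      (auxF_cont.comp (continuous_const.mul continuous_id))
  have contF' : ∀ x : ℝ, Continuous (fun v : ℝ => Real.exp (-a * v^2) * (Real.exp (-(x*v)^2) * v)) := by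
    intro x
    exact (Real.continuous_exp.comp (by continuity)).mul
      ((Real.continuous_exp.comp (by continuity)).mul continuous_id)
  have key := hasDerivAt_integral_of_dominated_loc_of_deriv_le
    (μ := volume.restrict (Ioi (0:ℝ)))
    (F := fun (x : ℝ) (v : ℝ) => Real.exp (-a * v^2) * auxF (x * v))
    (F' := fun (x : ℝ) (v : ℝ) => Real.exp (-a * v^2) * (Real.exp (-(x*v)^2) * v))
    (x₀ := b) (bound := fun v => |v| * Real.exp (-a * v^2)) (Metric.ball_mem_nhds b one_pos)
    (Filter.Eventually.of_forall fun x => ((contF x).aestronglyMeasurable).restrict)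
    ?_ ((contF' b).aestronglyMeasurable).restrict ?_
    (abs_mul_gauss_integrable ha).integrableOn ?_
  · have heq : (∫ v in Ioi (0:ℝ), Real.exp (-a * v^2) * (Real.exp (-(b*v)^2) * v))
        = 1 / (2 * (a + b^2)) := by
      have h1 : (∫ v in Ioi (0:ℝ), Real.exp (-a * v^2) * (Real.exp (-(b*v)^2) * v))
          = ∫ v in Ioi (0:ℝ), v * Real.exp (-(a + b^2) * v^2) := by
        apply setIntegral_congr_fun measurableSet_Ioi
        intro v _
        show Real.exp (-a * v^2) * (Real.exp (-(b*v)^2) * v) = v * Real.exp (-(a + b^2) * v^2)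
        rw [← mul_assoc, ← Real.exp_add, show -a*v^2 + -(b*v)^2 = -(a+b^2)*v^2 by ring]
        ring
      rw [h1, int_v_exp (by positivity)]
    rw [← heq]
    exact key.2
  · -- integrability of F b
    apply (((abs_mul_gauss_integrable ha).const_mul |b|).integrableOn).mono' ((contF b).aestronglyMeasurable).restrict
    filter_upwards with v
    rw [norm_mul, Real.norm_eq_abs, Real.norm_eq_abs, abs_of_pos (Real.exp_pos _)]
    have h1 : |auxF (b * v)| ≤ |b| * |v| := by
      have := auxF_abs_le (b * v); rwa [abs_mul] at this
    calc Real.exp (-a * v^2) * |auxF (b*v)| ≤ Real.exp (-a * v^2) * (|b| * |v|) :=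
          mul_le_mul_of_nonneg_left h1 (Real.exp_pos _).le
      _ = |b| * (|v| * Real.exp (-a * v^2)) := by ring
  · -- bound
    filter_upwards with v
    intro x _
    rw [norm_mul, norm_mul, Real.norm_eq_abs, Real.norm_eq_abs, Real.norm_eq_abs,
      abs_of_pos (Real.exp_pos _), abs_of_pos (Real.exp_pos _)]
    calc Real.exp (-a * v^2) * (Real.exp (-(x*v)^2) * |v|)
        ≤ Real.exp (-a * v^2) * (1 * |v|) := by
          apply mul_le_mul_of_nonneg_left ?_ (Real.exp_pos _).le
          exact mul_le_mul_of_nonneg_right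
            (Real.exp_le_one_iff.2 (by nlinarith [sq_nonneg (x*v)])) (abs_nonneg v)
      _ = |v| * Real.exp (-a * v^2) := by ring
  · -- differentiability
    filter_upwards with v
    intro x _
    have h1 : HasDerivAt (fun x : ℝ => x * v) v x := by simpa using (hasDerivAt_id x).mul_const v
    have h2 : HasDerivAt auxF (Real.exp (-(x*v)^2)) (x*v) := auxF_hasDerivAt (x*v)
    have h3 := (h2.comp x h1).const_mul (Real.exp (-a * v^2))
    simpa [mul_comm, mul_assoc, Function.comp] using h3

lemma phi_hasDerivAt {a : ℝ} (ha : 0 < a) (b : ℝ) :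
    HasDerivAt (fun b : ℝ => Real.arctan (b / Real.sqrt a) / (2 * Real.sqrt a))
      (1 / (2 * (a + b^2))) b := by
  have hsa : 0 < Real.sqrt a := Real.sqrt_pos.2 ha
  have hsq : Real.sqrt a ^ 2 = a := Real.sq_sqrt ha.le
  have h1 : HasDerivAt (fun b : ℝ => b / Real.sqrt a) (1 / Real.sqrt a) b := by
    simpa using (hasDerivAt_id b).div_const (Real.sqrt a)
  have h2 : HasDerivAt Real.arctan (1 / (1 + (b / Real.sqrt a)^2)) (b / Real.sqrt a) :=
    Real.hasDerivAt_arctan _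
  have h3 := (h2.comp b h1).div_const (2 * Real.sqrt a)
  refine h3.congr_deriv ?_
  rw [div_pow, hsq, show 1 + b^2/a = (a + b^2)/a by field_simp]
  rw [← hsq]
  set s := Real.sqrt a
  field_simp
  ring_nf
  rw [Real.sq_sqrt (sq_nonneg _)]

lemma G_eq_phi {a : ℝ} (ha : 0 < a) (b : ℝ) :
    (∫ v in Ioi (0:ℝ), Real.exp (-a * v^2) * auxF (b * v))
      = Real.arctan (b / Real.sqrt a) / (2 * Real.sqrt a) := by
  set Gf : ℝ → ℝ := fun b => ∫ v in Ioi (0:ℝ), Real.exp (-a * v^2) * auxF (b * v) with hGf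
  set Pf : ℝ → ℝ := fun b => Real.arctan (b / Real.sqrt a) / (2 * Real.sqrt a) with hPf
  have hd : ∀ x : ℝ, HasDerivAt (fun y => Gf y - Pf y) 0 x := by
    intro x
    have h := (auxG_hasDerivAt ha x).sub (phi_hasDerivAt ha x)
    rw [sub_self] at h
    exact h
  have hconst := is_const_of_deriv_eq_zero
    (𝕜 := ℝ) (f := fun y => Gf y - Pf y)
    (fun x => (hd x).differentiableAt) (fun x => (hd x).deriv) b 0
  have hG0 : Gf 0 = 0 := by
    simp [hGf, auxF_zero]
  have hP0 : Pf 0 = 0 := by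
    simp [hPf]
  have : Gf b - Pf b = 0 := by rw [hconst, hG0, hP0]; ring
  linarith

theorem stmt_5 (z : ℝ) (hz : 0 < z) (hz1 : z < 1) :
    ∫ v : ℝ, ∫ u : ℝ,
      Real.sign u * Real.sign v * Real.exp (-u ^ 2 - v ^ 2 + 2 * z * u * v)
    = 2 * Real.arcsin z / Real.sqrt (1 - z ^ 2) := by
  have ha : 0 < 1 - z^2 := by nlinarith
  have hsa : 0 < Real.sqrt (1 - z^2) := Real.sqrt_pos.2 ha
  have h1 : (∫ v : ℝ, ∫ u : ℝ,
      Real.sign u * Real.sign v * Real.exp (-u ^ 2 - v ^ 2 + 2 * z * u * v))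
      = ∫ v : ℝ, Real.sign v * (Real.exp (-(1 - z^2) * v^2) * (2 * auxF (z*v))) := by
    congr 1
    funext v
    exact inner_full z v
  rw [h1]
  have h2 := even_integral (g := fun v : ℝ => Real.sign v * (Real.exp (-(1 - z^2) * v^2) * (2 * auxF (z*v))))
    (outer_integrable ha z) ?_
  · rw [h2]
    have h3 : (∫ v in Ioi (0:ℝ), Real.sign v * (Real.exp (-(1 - z^2) * v^2) * (2 * auxF (z*v))))
        = ∫ v in Ioi (0:ℝ), 2 * (Real.exp (-(1 - z^2) * v^2) * auxF (z*v)) := by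
      apply setIntegral_congr_fun measurableSet_Ioi
      intro v hv
      show Real.sign v * (Real.exp (-(1 - z^2) * v^2) * (2 * auxF (z*v)))
          = 2 * (Real.exp (-(1 - z^2) * v^2) * auxF (z*v))
      rw [Real.sign_of_pos hv]
      ring
    rw [h3, MeasureTheory.integral_const_mul, G_eq_phi ha z]
    rw [Real.arcsin_eq_arctan (by constructor <;> [linarith; exact hz1])]
    field_simp
  · intro v
    show Real.sign (-v) * (Real.exp (-(1 - z^2) * (-v)^2) * (2 * auxF (z * -v)))
        = Real.sign v * (Real.exp (-(1 - z^2) * v^2) * (2 * auxF (z*v)))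
    rw [Real.sign_neg, show z * -v = -(z*v) by ring, auxF_neg, neg_pow]
    ring
end

section
/- Let $f,g:\mathbb{R}^2\to[-1,1]$ be measurable functions, and for complex $z = a+bi$ with $|a| < 1$ define $H(z) = \frac{1}{2\pi(1-z^2)}\int_{\mathbb{R}^2\times\mathbb{R}^2} f(x)g(y)\exp\left(\frac{-\|x\|_2^2-\|y\|_2^2+2z\langle x,y\rangle}{1-z^2}\right)dx\,dy$. Then $|H(a+bi)| \le \frac{\pi((1+a)^2+b^2)((1-a)^2+b^2)}{2(1-a^2)\sqrt{(1-a^2)^2+b^4+2(1+a^2)b^2}}$. -/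
open MeasureTheory Real Complex

set_option maxHeartbeats 1000000 in
theorem stmt_7 (f g : ℝ × ℝ → ℝ) (hf : Measurable f) (hg : Measurable g)
    (hf1 : ∀ x, f x ∈ Set.Icc (-1 : ℝ) 1) (hg1 : ∀ y, g y ∈ Set.Icc (-1 : ℝ) 1)
    (a b : ℝ) (ha : |a| < 1) :
    ‖((1 / (2 * Real.pi * (1 - (a + b * Complex.I) ^ 2))) *
        ∫ x : ℝ × ℝ, ∫ y : ℝ × ℝ,
          (f x * g y : ℝ) *
            Complex.exp (((-(x.1 ^ 2 + x.2 ^ 2) - (y.1 ^ 2 + y.2 ^ 2)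
              + 2 * (a + b * Complex.I) * (x.1 * y.1 + x.2 * y.2)) : ℂ)
              / (1 - (a + b * Complex.I) ^ 2)))‖
    ≤ Real.pi * ((1 + a) ^ 2 + b ^ 2) * ((1 - a) ^ 2 + b ^ 2)
        / (2 * (1 - a ^ 2) *
            Real.sqrt ((1 - a ^ 2) ^ 2 + b ^ 4 + 2 * (1 + a ^ 2) * b ^ 2)) := by
  obtain ⟨ha1, ha2⟩ := abs_lt.mp ha
  have ha' : 0 < 1 - a ^ 2 := by nlinarith
  set S : ℝ := (1 - a ^ 2) ^ 2 + b ^ 4 + 2 * (1 + a ^ 2) * b ^ 2 with hSdef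
  have hS : 0 < S := by positivity
  set z : ℂ := a + b * Complex.I with hz
  have hnormSq : Complex.normSq (1 - z ^ 2) = S := by
    simp only [hz, Complex.normSq_apply, Complex.sub_re, Complex.sub_im, Complex.one_re,
      Complex.one_im, sq, Complex.mul_re, Complex.mul_im, Complex.add_re, Complex.add_im,
      Complex.ofReal_re, Complex.ofReal_im, Complex.mul_I_re, Complex.mul_I_im, Complex.I_re,
      Complex.I_im, hSdef]
    ring
  have hDne : (1 : ℂ) - z ^ 2 ≠ 0 := by
    intro h
    rw [h, Complex.normSq_zero] at hnormSq
    exact absurd hnormSq.symm (ne_of_gt hS)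
  have habsD : ‖1 - z ^ 2‖ = Real.sqrt S := by
    rw [Complex.norm_def, hnormSq]
  set p : ℝ := ((1 - z ^ 2)⁻¹).re with hpdef
  set r : ℝ := (z * (1 - z ^ 2)⁻¹).re with hrdef
  have hDre : (1 - z ^ 2).re = 1 - a ^ 2 + b ^ 2 := by
    simp only [hz, Complex.sub_re, Complex.one_re, sq, Complex.mul_re, Complex.add_re,
      Complex.add_im, Complex.ofReal_re, Complex.ofReal_im, Complex.mul_I_re, Complex.mul_I_im,
      Complex.I_re, Complex.I_im, Complex.mul_im]
    ring
  have hDim : (1 - z ^ 2).im = -(2 * a * b) := by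
    simp only [hz, Complex.sub_im, Complex.one_im, sq, Complex.mul_re, Complex.add_re,
      Complex.add_im, Complex.ofReal_re, Complex.ofReal_im, Complex.mul_I_re, Complex.mul_I_im,
      Complex.I_re, Complex.I_im, Complex.mul_im]
    ring
  have hp : p = (1 - a ^ 2 + b ^ 2) / S := by
    rw [hpdef, Complex.inv_re, hnormSq, hDre]
  have hr : r = a * (1 - a ^ 2 - b ^ 2) / S := by
    rw [hrdef, Complex.mul_re, Complex.inv_re, Complex.inv_im, hnormSq, hDre, hDim]
    have : z.re = a := by simp [hz]
    rw [this]
    have : z.im = b := by simp [hz]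
    rw [this]
    field_simp
    ring
  have hppos : 0 < p := by rw [hp]; positivity
  have hpne : p ≠ 0 := ne_of_gt hppos
  have hpr : p ^ 2 - r ^ 2 = (1 - a ^ 2) / S := by
    rw [hp, hr]
    rw [div_pow, div_pow, div_sub_div_same, hSdef]
    rw [div_eq_div_iff (by positivity) (by positivity)]
    ring
  set q : ℝ := (p ^ 2 - r ^ 2) / p with hqdef
  have hqpos : 0 < q := by rw [hqdef, hpr]; positivity
  have hpq : p * q = p ^ 2 - r ^ 2 := by rw [hqdef]; field_simp
  set E : ℝ → ℝ → ℝ := fun u v => Real.exp (2 * r * (u * v) - p * (u ^ 2 + v ^ 2)) with hE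
  clear_value S z p r q E
  have hEeq : ∀ u v : ℝ, E u v =
      Real.exp (-q * u ^ 2) * Real.exp (-p * (v - r * u / p) ^ 2) := by
    intro u v
    simp only [hE]
    rw [← Real.exp_add]
    congr 1
    rw [hqdef]
    field_simp
    ring
  have hEint : ∀ u : ℝ, Integrable (E u) := by
    intro u
    have h : E u = fun v => Real.exp (-q * u ^ 2) * Real.exp (-p * (v - r * u / p) ^ 2) :=
      funext (hEeq u)
    rw [h]
    exact ((integrable_exp_neg_mul_sq hppos).comp_sub_right (r * u / p)).const_mul _
  have hEval : ∀ u : ℝ, (∫ v, E u v) = Real.exp (-q * u ^ 2) * Real.sqrt (π / p) := by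
    intro u
    simp only [hEeq]
    rw [integral_const_mul]
    congr 1
    have h1 : (∫ v : ℝ, Real.exp (-p * (v - r * u / p) ^ 2)) = ∫ v : ℝ, Real.exp (-p * v ^ 2) :=
      integral_sub_right_eq_self (fun t : ℝ => Real.exp (-p * t ^ 2)) (r * u / p)
    rw [h1, integral_gaussian]
  set Q : ℝ → ℝ := fun u => Real.exp (-q * u ^ 2) * Real.sqrt (π / p) with hQ
  have hQint : Integrable Q := (integrable_exp_neg_mul_sq hqpos).mul_const _
  have hQval : ∫ u, Q u = Real.sqrt (π / q) * Real.sqrt (π / p) := by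
    rw [hQ, integral_mul_const, integral_gaussian]
  -- real part of the exponent
  have hwre : ∀ A C : ℝ, (((A : ℂ) + 2 * z * C) / (1 - z ^ 2)).re = A * p + 2 * C * r := by
    intro A C
    have h : ((A : ℂ) + 2 * z * C) / (1 - z ^ 2) =
        (A : ℂ) * (1 - z ^ 2)⁻¹ + ((2 * C : ℝ) : ℂ) * (z * (1 - z ^ 2)⁻¹) := by
      push_cast
      ring
    rw [h, Complex.add_re, Complex.re_ofReal_mul, Complex.re_ofReal_mul, ← hpdef, ← hrdef]
  -- the pointwise bound
  have hnormF : ∀ x y : ℝ × ℝ,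
      ‖((f x * g y : ℝ) : ℂ) *
        Complex.exp (((-(x.1 ^ 2 + x.2 ^ 2) - (y.1 ^ 2 + y.2 ^ 2)
          + 2 * z * (x.1 * y.1 + x.2 * y.2)) : ℂ) / (1 - z ^ 2))‖
      ≤ E x.1 y.1 * E x.2 y.2 := by
    intro x y
    have hnum : ((-(x.1 ^ 2 + x.2 ^ 2) - (y.1 ^ 2 + y.2 ^ 2)
        + 2 * z * (x.1 * y.1 + x.2 * y.2)) : ℂ) =
        ((((-(x.1 ^ 2 + x.2 ^ 2) - (y.1 ^ 2 + y.2 ^ 2)) : ℝ) : ℂ)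
          + 2 * z * (((x.1 * y.1 + x.2 * y.2) : ℝ) : ℂ)) := by
      push_cast
      ring
    rw [norm_mul, Complex.norm_real, Complex.norm_exp, hnum, hwre]
    have hfg : ‖f x * g y‖ ≤ 1 := by
      rw [Real.norm_eq_abs, abs_mul]
      have h1 := hf1 x
      have h2 := hg1 y
      rw [Set.mem_Icc] at h1 h2
      have : |f x| ≤ 1 := abs_le.mpr ⟨h1.1, h1.2⟩
      have : |g y| ≤ 1 := abs_le.mpr ⟨h2.1, h2.2⟩
      nlinarith [abs_nonneg (f x), abs_nonneg (g y), abs_le.mpr ⟨h1.1, h1.2⟩,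
        abs_le.mpr ⟨h2.1, h2.2⟩]
    have hexp : Real.exp ((-(x.1 ^ 2 + x.2 ^ 2) - (y.1 ^ 2 + y.2 ^ 2)) * p
        + 2 * (x.1 * y.1 + x.2 * y.2) * r) = E x.1 y.1 * E x.2 y.2 := by
      rw [hE, ← Real.exp_add]
      congr 1
      ring
    calc ‖f x * g y‖ * Real.exp ((-(x.1 ^ 2 + x.2 ^ 2) - (y.1 ^ 2 + y.2 ^ 2)) * p
          + 2 * (x.1 * y.1 + x.2 * y.2) * r)
        ≤ 1 * Real.exp ((-(x.1 ^ 2 + x.2 ^ 2) - (y.1 ^ 2 + y.2 ^ 2)) * p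
          + 2 * (x.1 * y.1 + x.2 * y.2) * r) := by
          exact mul_le_mul_of_nonneg_right hfg (Real.exp_nonneg _)
      _ = E x.1 y.1 * E x.2 y.2 := by rw [one_mul, hexp]
  -- main integral bound
  rw [norm_mul]
  have hcabs : ‖1 / (2 * (π : ℂ) * (1 - z ^ 2))‖ = 1 / (2 * π * Real.sqrt S) := by
    rw [norm_div, norm_one, norm_mul, norm_mul, habsD, Complex.norm_two, Complex.norm_real,
      Real.norm_eq_abs, abs_of_pos Real.pi_pos]
  rw [hcabs]
  have hI : ‖(∫ x : ℝ × ℝ, ∫ y : ℝ × ℝ,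
      ((f x * g y : ℝ) : ℂ) *
        Complex.exp (((-(x.1 ^ 2 + x.2 ^ 2) - (y.1 ^ 2 + y.2 ^ 2)
          + 2 * z * (x.1 * y.1 + x.2 * y.2)) : ℂ) / (1 - z ^ 2)))‖
      ≤ (∫ u, Q u) * (∫ u, Q u) := by
    refine le_trans (norm_integral_le_integral_norm _) ?_
    have hmid : ∀ x : ℝ × ℝ, ‖∫ y : ℝ × ℝ,
        ((f x * g y : ℝ) : ℂ) *
          Complex.exp (((-(x.1 ^ 2 + x.2 ^ 2) - (y.1 ^ 2 + y.2 ^ 2)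
            + 2 * z * (x.1 * y.1 + x.2 * y.2)) : ℂ) / (1 - z ^ 2))‖ ≤ Q x.1 * Q x.2 := by
      intro x
      refine le_trans (norm_integral_le_integral_norm _) ?_
      have hEE : Integrable (fun y : ℝ × ℝ => E x.1 y.1 * E x.2 y.2) := by
        rw [Measure.volume_eq_prod]
        exact (hEint x.1).mul_prod (hEint x.2)
      calc (∫ y : ℝ × ℝ, ‖((f x * g y : ℝ) : ℂ) *
            Complex.exp (((-(x.1 ^ 2 + x.2 ^ 2) - (y.1 ^ 2 + y.2 ^ 2)
              + 2 * z * (x.1 * y.1 + x.2 * y.2)) : ℂ) / (1 - z ^ 2))‖)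
          ≤ ∫ y : ℝ × ℝ, E x.1 y.1 * E x.2 y.2 :=
            integral_mono_of_nonneg (Filter.Eventually.of_forall fun y => norm_nonneg _)
              hEE (Filter.Eventually.of_forall fun y => hnormF x y)
        _ = (∫ v, E x.1 v) * (∫ v, E x.2 v) := by
            rw [Measure.volume_eq_prod]; exact integral_prod_mul _ _
        _ = Q x.1 * Q x.2 := by rw [hEval, hEval]
    have hQQ : Integrable (fun x : ℝ × ℝ => Q x.1 * Q x.2) := by
      rw [Measure.volume_eq_prod]
      exact hQint.mul_prod hQint
    calc (∫ x : ℝ × ℝ, ‖∫ y : ℝ × ℝ,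
          ((f x * g y : ℝ) : ℂ) *
            Complex.exp (((-(x.1 ^ 2 + x.2 ^ 2) - (y.1 ^ 2 + y.2 ^ 2)
              + 2 * z * (x.1 * y.1 + x.2 * y.2)) : ℂ) / (1 - z ^ 2))‖)
        ≤ ∫ x : ℝ × ℝ, Q x.1 * Q x.2 :=
          integral_mono_of_nonneg (Filter.Eventually.of_forall fun x => norm_nonneg _)
            hQQ (Filter.Eventually.of_forall hmid)
      _ = (∫ u, Q u) * (∫ u, Q u) := by
          rw [Measure.volume_eq_prod]; exact integral_prod_mul _ _
  refine le_trans (mul_le_mul_of_nonneg_left hI (by positivity)) ?_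
  rw [hQval]
  -- final computation
  have hsq : (Real.sqrt (π / q) * Real.sqrt (π / p)) * (Real.sqrt (π / q) * Real.sqrt (π / p))
      = π ^ 2 / (p * q) := by
    rw [mul_mul_mul_comm, Real.mul_self_sqrt (by positivity), Real.mul_self_sqrt (by positivity)]
    field_simp
  have hsS : (0 : ℝ) < Real.sqrt S := Real.sqrt_pos.mpr hS
  have hsne : Real.sqrt S ≠ 0 := ne_of_gt hsS
  have hpine : (π : ℝ) ≠ 0 := ne_of_gt Real.pi_pos
  have hane : (1 : ℝ) - a ^ 2 ≠ 0 := ne_of_gt ha'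
  have hSne : S ≠ 0 := ne_of_gt hS
  have hprod : π * ((1 + a) ^ 2 + b ^ 2) * ((1 - a) ^ 2 + b ^ 2) = π * S := by
    rw [hSdef]; ring
  rw [hsq, hpq, hpr, hprod]
  apply le_of_eq
  field_simp
end

section
/- For every $x\in(0,1)$, $\cosh(x)\sqrt{1-x^2} < 1$. -/
theorem stmt_9 (x : ℝ) (hx0 : 0 < x) (hx1 : x < 1) :
    Real.cosh x * Real.sqrt (1 - x ^ 2) < 1 := by
  have hnn : (0:ℝ) ≤ 1 - x ^ 2 := by nlinarith
  have hs : Real.sqrt (1 - x ^ 2) * Real.sqrt (1 - x ^ 2) = 1 - x ^ 2 :=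
    Real.mul_self_sqrt hnn
  have hsnn : 0 ≤ Real.sqrt (1 - x ^ 2) := Real.sqrt_nonneg _
  have h1 : Real.cosh x ≤ Real.exp (x ^ 2 / 2) := Real.cosh_le_exp_half_sq x
  have he : 1 - x ^ 2 < Real.exp (-(x ^ 2)) := by
    have := Real.add_one_lt_exp (show -(x ^ 2) ≠ 0 by nlinarith)
    linarith
  have hmul : Real.exp (x ^ 2 / 2) * Real.exp (x ^ 2 / 2) = Real.exp (x ^ 2) := by
    rw [← Real.exp_add]; ring_nf
  have hinv : Real.exp (-(x ^ 2)) * Real.exp (x ^ 2) = 1 := by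
    rw [← Real.exp_add]; simp
  have hexp : Real.exp (x ^ 2) * (1 - x ^ 2) < 1 := by
    have hpos := Real.exp_pos (x ^ 2)
    nlinarith
  have hcpos : 0 < Real.cosh x := Real.cosh_pos x
  have hepos := Real.exp_pos (x ^ 2 / 2)
  nlinarith [sq_nonneg (Real.cosh x * Real.sqrt (1 - x ^ 2) - 1),
    mul_le_mul h1 h1 hcpos.le hepos.le]
end

section
/- Let $f:(0,\infty)\to[-1,1]$ be measurable and define $I(y) = \int_0^\infty f(x)\exp(-\frac{x^2+y^2}{2})\sin(xy)\,dx$ for $y\ge 0$. Then $I$ is Lipschitz with constant $\sqrt{2}$. -/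
open MeasureTheory Real

noncomputable def hh (x : ℝ) : ℝ := if x ≤ 1 then Real.exp (-1/2) else x * Real.exp (-(x^2)/2)

-- decay bound: r e^{-r²/2} ≤ e^{-1/2}
lemma aux1 (r : ℝ) (hr : 0 ≤ r) : r * Real.exp (-(r^2)/2) ≤ Real.exp (-1/2) := by
  have h1 : r ≤ Real.exp ((r^2-1)/2) := by
    have := Real.add_one_le_exp ((r^2-1)/2)
    nlinarith [sq_nonneg (r-1)]
  calc r * Real.exp (-(r^2)/2) ≤ Real.exp ((r^2-1)/2) * Real.exp (-(r^2)/2) :=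
        mul_le_mul_of_nonneg_right h1 (Real.exp_pos _).le
    _ = Real.exp (-1/2) := by rw [← Real.exp_add]; ring_nf

-- decreasing for r ≥ 1
lemma aux2 (x r : ℝ) (hx : 1 ≤ x) (hr : x ≤ r) :
    r * Real.exp (-(r^2)/2) ≤ x * Real.exp (-(x^2)/2) := by
  have h1 : r ≤ x * Real.exp ((r^2-x^2)/2) := by
    have h2 := Real.add_one_le_exp ((r^2-x^2)/2)
    have h3 : x * ((r^2-x^2)/2 + 1) ≤ x * Real.exp ((r^2-x^2)/2) :=
      mul_le_mul_of_nonneg_left h2 (by linarith)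
    nlinarith [mul_nonneg (sub_nonneg.2 hr) (sub_nonneg.2 (show (2:ℝ) ≤ x*(r+x) by nlinarith))]
  calc r * Real.exp (-(r^2)/2) ≤ x * Real.exp ((r^2-x^2)/2) * Real.exp (-(r^2)/2) :=
        mul_le_mul_of_nonneg_right h1 (Real.exp_pos _).le
    _ = x * Real.exp (-(x^2)/2) := by rw [mul_assoc, ← Real.exp_add]; ring_nf

lemma aux3 (x y : ℝ) (hx : 0 ≤ x) :
    Real.sqrt (x^2+y^2) * Real.exp (-(x^2+y^2)/2) ≤ hh x := by
  set r := Real.sqrt (x^2+y^2) with hrdef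
  have hr0 : 0 ≤ r := Real.sqrt_nonneg _
  have hr2 : r^2 = x^2+y^2 := Real.sq_sqrt (by positivity)
  have hxr : x ≤ r := by
    rw [hrdef]
    calc x = Real.sqrt (x^2) := (Real.sqrt_sq hx).symm
      _ ≤ _ := Real.sqrt_le_sqrt (by nlinarith)
  unfold hh
  split_ifs with h
  · rw [← hr2]; exact aux1 r hr0
  · rw [← hr2]; exact aux2 x r (le_of_not_ge h) hxr

lemma auxderiv (x y : ℝ) :
    HasDerivAt (fun y => Real.exp (-(x^2+y^2)/2) * Real.sin (x*y))
      (Real.exp (-(x^2+y^2)/2) * (x * Real.cos (x*y) - y * Real.sin (x*y))) y := by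
  have h1 : HasDerivAt (fun y : ℝ => -(x^2+y^2)/2) (-y) y := by
    have := (((hasDerivAt_pow 2 y).const_add (x^2)).neg).div_const 2
    exact this.congr_deriv (by norm_num; ring)
  have h2 := h1.exp
  have h3 : HasDerivAt (fun y : ℝ => x*y) x y := by
    simpa using (hasDerivAt_id y).const_mul x
  have h4 := h3.sin
  have := h2.mul h4
  exact this.congr_deriv (by ring)

lemma auxlip (x y₁ y₂ : ℝ) (hx : 0 ≤ x) :
    |Real.exp (-(x^2+y₁^2)/2) * Real.sin (x*y₁) - Real.exp (-(x^2+y₂^2)/2) * Real.sin (x*y₂)|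
      ≤ hh x * |y₁ - y₂| := by
  have key := Convex.norm_image_sub_le_of_norm_hasDerivWithin_le
    (f := fun y => Real.exp (-(x^2+y^2)/2) * Real.sin (x*y))
    (f' := fun y => Real.exp (-(x^2+y^2)/2) * (x * Real.cos (x*y) - y * Real.sin (x*y)))
    (C := hh x) (s := Set.univ)
    (fun y _ => (auxderiv x y).hasDerivWithinAt)
    (fun y _ => ?_) convex_univ (Set.mem_univ y₂) (Set.mem_univ y₁)
  · simpa [Real.norm_eq_abs] using key
  · rw [Real.norm_eq_abs, abs_mul, Real.abs_exp]
    have h1 : |x * Real.cos (x*y) - y * Real.sin (x*y)| ≤ Real.sqrt (x^2+y^2) := by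
      rw [abs_le]
      have hs := Real.sin_sq_add_cos_sq (x*y)
      have h2 : (x * Real.cos (x*y) - y * Real.sin (x*y))^2 ≤ x^2+y^2 := by nlinarith [sq_nonneg (x * Real.sin (x*y) + y * Real.cos (x*y))]
      constructor
      · nlinarith [Real.sq_sqrt (show (0:ℝ) ≤ x^2+y^2 by positivity), Real.sqrt_nonneg (x^2+y^2)]
      · nlinarith [Real.sq_sqrt (show (0:ℝ) ≤ x^2+y^2 by positivity), Real.sqrt_nonneg (x^2+y^2)]
    calc Real.exp (-(x^2+y^2)/2) * |x * Real.cos (x*y) - y * Real.sin (x*y)|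
        ≤ Real.exp (-(x^2+y^2)/2) * Real.sqrt (x^2+y^2) :=
          mul_le_mul_of_nonneg_left h1 (Real.exp_pos _).le
      _ = Real.sqrt (x^2+y^2) * Real.exp (-(x^2+y^2)/2) := mul_comm _ _
      _ ≤ hh x := aux3 x y hx

lemma hh_int_Ioi1 : IntegrableOn (fun x => x * Real.exp (-(x^2)/2)) (Set.Ioi 1) := by
  have := (integrable_mul_exp_neg_mul_sq (b := 1/2) (by norm_num)).integrableOn
    (s := Set.Ioi 1)
  refine this.congr_fun (fun x _ => by ring_nf) measurableSet_Ioi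

lemma hh_integrableOn : IntegrableOn hh (Set.Ioi 0) := by
  have h1 : IntegrableOn hh (Set.Ioc 0 1) := by
    refine (integrableOn_const (C := Real.exp (-1/2)) (hs := ?_)) |>.congr_fun (fun x hx => ?_) measurableSet_Ioc
    · rw [Real.volume_Ioc]; norm_num
    · simp [hh, hx.2]
  have h2 : IntegrableOn hh (Set.Ioi 1) := by
    refine hh_int_Ioi1.congr_fun (fun x hx => ?_) measurableSet_Ioi
    simp [hh, not_le.2 (show (1:ℝ) < x from hx)]
  have := h1.union h2
  rwa [Set.Ioc_union_Ioi_eq_Ioi zero_le_one] at this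
lemma deriv_negexp (x : ℝ) : HasDerivAt (fun x : ℝ => -Real.exp (-(x^2)/2))
    (x * Real.exp (-(x^2)/2)) x := by
  have h1 : HasDerivAt (fun x : ℝ => -(x^2)/2) (-x) x := by
    have := ((hasDerivAt_pow 2 x).neg).div_const 2
    exact this.congr_deriv (by norm_num; ring)
  have := h1.exp.neg
  exact this.congr_deriv (by ring)

lemma tendsto_negexp : Filter.Tendsto (fun x : ℝ => -Real.exp (-(x^2)/2))
    Filter.atTop (nhds 0) := by
  have h1 : Filter.Tendsto (fun x : ℝ => -(x^2)/2) Filter.atTop Filter.atBot := by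
    apply Filter.Tendsto.atBot_div_const (by norm_num : (0:ℝ) < 2)
    exact Filter.tendsto_neg_atBot_iff.2 (Filter.tendsto_pow_atTop two_ne_zero)
  have := (Real.tendsto_exp_atBot.comp h1).neg
  simpa using this

lemma hh_integral : ∫ x in Set.Ioi (0:ℝ), hh x = 2 * Real.exp (-1/2) := by
  have h1 : ∫ x in Set.Ioc (0:ℝ) 1, hh x = Real.exp (-1/2) := by
    rw [setIntegral_congr_fun measurableSet_Ioc (g := fun _ => Real.exp (-1/2))
      (fun x hx => by simp [hh, hx.2])]
    simp [Real.volume_Ioc]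
  have h2 : ∫ x in Set.Ioi (1:ℝ), hh x = Real.exp (-1/2) := by
    rw [setIntegral_congr_fun measurableSet_Ioi (g := fun x => x * Real.exp (-(x^2)/2))
      (fun x hx => by simp [hh, not_le.2 (show (1:ℝ) < x from hx)])]
    have := integral_Ioi_of_hasDerivAt_of_tendsto' (a := 1)
      (f := fun x : ℝ => -Real.exp (-(x^2)/2))
      (f' := fun x => x * Real.exp (-(x^2)/2))
      (fun x _ => deriv_negexp x) hh_int_Ioi1 tendsto_negexp
    rw [this]; norm_num
  have hdisj : Disjoint (Set.Ioc (0:ℝ) 1) (Set.Ioi 1) := Set.Ioc_disjoint_Ioi le_rfl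
  have key := setIntegral_union hdisj measurableSet_Ioi
    (hh_integrableOn.mono_set (by intro x hx; exact hx.1))
    (hh_integrableOn.mono_set (by intro x hx; exact lt_trans one_pos (show (1:ℝ) < x from hx)))
  rw [Set.Ioc_union_Ioi_eq_Ioi zero_le_one] at key
  rw [key, h1, h2]; ring

lemma two_exp_le_sqrt_two : 2 * Real.exp (-1/2) ≤ Real.sqrt 2 := by
  have h2e : (2:ℝ) < Real.exp 1 := lt_trans (by norm_num) Real.exp_one_gt_d9
  have e1 : Real.exp (-1/2) * Real.exp (-1/2) = Real.exp (-1) := by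
    rw [← Real.exp_add]; norm_num
  have e2 : Real.exp (-1) * Real.exp 1 = 1 := by rw [← Real.exp_add]; simp
  have hsq : (2 * Real.exp (-1/2))^2 ≤ 2 := by nlinarith [Real.exp_pos 1, Real.exp_pos (-1)]
  calc 2 * Real.exp (-1/2) = Real.sqrt ((2 * Real.exp (-1/2))^2) :=
        (Real.sqrt_sq (by positivity)).symm
    _ ≤ Real.sqrt 2 := Real.sqrt_le_sqrt hsq

theorem stmt_11 (f : ℝ → ℝ) (hf : Measurable f)
    (hf1 : ∀ x ∈ Set.Ioi (0 : ℝ), f x ∈ Set.Icc (-1 : ℝ) 1)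
    (I : ℝ → ℝ)
    (hI : ∀ y, I y = ∫ x in Set.Ioi (0 : ℝ),
      f x * Real.exp (-(x ^ 2 + y ^ 2) / 2) * Real.sin (x * y)) :
    ∀ y₁ ∈ Set.Ici (0 : ℝ), ∀ y₂ ∈ Set.Ici (0 : ℝ),
      |I y₁ - I y₂| ≤ Real.sqrt 2 * |y₁ - y₂| := by
  intro y₁ _ y₂ _
  have hmeas : ∀ y : ℝ, AEStronglyMeasurable
      (fun x => f x * Real.exp (-(x ^ 2 + y ^ 2) / 2) * Real.sin (x * y))
      (volume.restrict (Set.Ioi (0:ℝ))) := by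
    intro y
    exact ((hf.mul (Measurable.exp (by fun_prop))).mul (by fun_prop)).aestronglyMeasurable
  have hint : ∀ y : ℝ, IntegrableOn
      (fun x => f x * Real.exp (-(x ^ 2 + y ^ 2) / 2) * Real.sin (x * y))
      (Set.Ioi (0:ℝ)) := by
    intro y
    refine Integrable.mono' (g := fun x => Real.exp (-(1/2) * x^2))
      ((integrable_exp_neg_mul_sq (by norm_num : (0:ℝ) < 1/2)).integrableOn)
      (hmeas y) ?_
    rw [ae_restrict_iff' measurableSet_Ioi]
    filter_upwards with x hx
    have h1 : |f x| ≤ 1 := abs_le.2 ⟨(hf1 x hx).1, (hf1 x hx).2⟩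
    have h2 : Real.exp (-(x ^ 2 + y ^ 2) / 2) ≤ Real.exp (-(1/2) * x^2) :=
      Real.exp_le_exp.2 (by nlinarith [sq_nonneg y])
    rw [Real.norm_eq_abs, abs_mul, abs_mul, Real.abs_exp]
    calc |f x| * Real.exp (-(x ^ 2 + y ^ 2) / 2) * |Real.sin (x * y)|
        ≤ 1 * Real.exp (-(1/2) * x^2) * 1 := by
          apply mul_le_mul (mul_le_mul h1 h2 (Real.exp_pos _).le zero_le_one)
            (Real.abs_sin_le_one _) (abs_nonneg _) (by positivity)
      _ = Real.exp (-(1/2) * x^2) := by ring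
  rw [hI y₁, hI y₂, ← integral_sub (hint y₁) (hint y₂)]
  have key : ‖∫ x in Set.Ioi (0:ℝ),
      (f x * Real.exp (-(x ^ 2 + y₁ ^ 2) / 2) * Real.sin (x * y₁)
        - f x * Real.exp (-(x ^ 2 + y₂ ^ 2) / 2) * Real.sin (x * y₂))‖
      ≤ ∫ x in Set.Ioi (0:ℝ), hh x * |y₁ - y₂| := by
    refine norm_integral_le_of_norm_le (hh_integrableOn.mul_const _) ?_
    rw [ae_restrict_iff' measurableSet_Ioi]
    filter_upwards with x hx
    have h1 : |f x| ≤ 1 := abs_le.2 ⟨(hf1 x hx).1, (hf1 x hx).2⟩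
    have heq : f x * Real.exp (-(x ^ 2 + y₁ ^ 2) / 2) * Real.sin (x * y₁)
        - f x * Real.exp (-(x ^ 2 + y₂ ^ 2) / 2) * Real.sin (x * y₂)
        = f x * (Real.exp (-(x ^ 2 + y₁ ^ 2) / 2) * Real.sin (x * y₁)
          - Real.exp (-(x ^ 2 + y₂ ^ 2) / 2) * Real.sin (x * y₂)) := by ring
    rw [Real.norm_eq_abs, heq, abs_mul]
    calc |f x| * |Real.exp (-(x ^ 2 + y₁ ^ 2) / 2) * Real.sin (x * y₁)
          - Real.exp (-(x ^ 2 + y₂ ^ 2) / 2) * Real.sin (x * y₂)|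
        ≤ 1 * (hh x * |y₁ - y₂|) := by
          refine mul_le_mul h1 ?_ (abs_nonneg _) zero_le_one
          have := auxlip x y₁ y₂ (le_of_lt hx)
          convert this using 3 <;> ring
      _ = hh x * |y₁ - y₂| := one_mul _
  rw [Real.norm_eq_abs] at key
  calc |∫ x in Set.Ioi (0:ℝ),
        (f x * Real.exp (-(x ^ 2 + y₁ ^ 2) / 2) * Real.sin (x * y₁)
          - f x * Real.exp (-(x ^ 2 + y₂ ^ 2) / 2) * Real.sin (x * y₂))|
      ≤ ∫ x in Set.Ioi (0:ℝ), hh x * |y₁ - y₂| := key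
    _ = (∫ x in Set.Ioi (0:ℝ), hh x) * |y₁ - y₂| := integral_mul_const _ _
    _ = 2 * Real.exp (-1/2) * |y₁ - y₂| := by rw [hh_integral]
    _ ≤ Real.sqrt 2 * |y₁ - y₂| :=
        mul_le_mul_of_nonneg_right two_exp_le_sqrt_two (abs_nonneg _)
end

section
/- For every $a > 0$, $\int_a^\infty e^{-x^2/2}\,dx < \frac{16}{3e^2 a^3}$. -/
open MeasureTheory Real Set

lemma ptlt (x : ℝ) (hx : 0 < x) (hx2 : x ≠ 2) :
    Real.exp (-x ^ 2 / 2) < 16 / Real.exp 1 ^ 2 * x ^ (-4 : ℝ) := by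
  have he : Real.exp 1 ^ 2 = Real.exp 2 := by
    rw [← Real.exp_nat_mul]; norm_num
  have hne : x ^ 2 / 4 - 1 ≠ 0 := by
    intro h
    have h1 : (x - 2) * (x + 2) = 0 := by nlinarith
    rcases mul_eq_zero.1 h1 with h2 | h2
    · exact hx2 (by linarith)
    · linarith
  have h1 : x ^ 2 / 4 < Real.exp (x ^ 2 / 4 - 1) := by
    have := Real.add_one_lt_exp hne; linarith
  have h2 : (x ^ 2 / 4) ^ 2 < Real.exp (x ^ 2 / 4 - 1) ^ 2 := by
    apply pow_lt_pow_left₀ h1 (by positivity); norm_num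
  rw [← Real.exp_nat_mul] at h2
  have h3 : x ^ 4 < 16 * Real.exp (x ^ 2 / 2 - 2) := by
    have heq : ((2:ℕ):ℝ) * (x ^ 2 / 4 - 1) = x ^ 2 / 2 - 2 := by push_cast; ring
    rw [heq] at h2; nlinarith
  have hr : x ^ (-4 : ℝ) = (x ^ 4)⁻¹ := by
    rw [show (-4 : ℝ) = -(4:ℕ) by norm_num, Real.rpow_neg hx.le, Real.rpow_natCast]
  rw [hr, ← div_eq_mul_inv, lt_div_iff₀ (by positivity), he]
  have hmul : Real.exp (-x ^ 2 / 2) * Real.exp (x ^ 2 / 2 - 2) = Real.exp (-2) := by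
    rw [← Real.exp_add]; ring_nf
  have h4 := mul_lt_mul_of_pos_left h3 (Real.exp_pos (-x ^ 2 / 2))
  rw [mul_comm (16:ℝ) _, ← mul_assoc, hmul, Real.exp_neg] at h4
  refine h4.trans_eq ?_
  rw [div_eq_mul_inv]; ring

lemma ptle (x : ℝ) (hx : 0 < x) :
    Real.exp (-x ^ 2 / 2) ≤ 16 / Real.exp 1 ^ 2 * x ^ (-4 : ℝ) := by
  have he : Real.exp 1 ^ 2 = Real.exp 2 := by
    rw [← Real.exp_nat_mul]; norm_num
  have h1 : x ^ 2 / 4 ≤ Real.exp (x ^ 2 / 4 - 1) := by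
    have := Real.add_one_le_exp (x ^ 2 / 4 - 1); linarith
  have h2 : (x ^ 2 / 4) ^ 2 ≤ Real.exp (x ^ 2 / 4 - 1) ^ 2 :=
    pow_le_pow_left₀ (by positivity) h1 2
  rw [← Real.exp_nat_mul] at h2
  have h3 : x ^ 4 ≤ 16 * Real.exp (x ^ 2 / 2 - 2) := by
    have heq : ((2:ℕ):ℝ) * (x ^ 2 / 4 - 1) = x ^ 2 / 2 - 2 := by push_cast; ring
    rw [heq] at h2; nlinarith
  have hr : x ^ (-4 : ℝ) = (x ^ 4)⁻¹ := by
    rw [show (-4 : ℝ) = -(4:ℕ) by norm_num, Real.rpow_neg hx.le, Real.rpow_natCast]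
  rw [hr, ← div_eq_mul_inv, le_div_iff₀ (by positivity), he]
  have hmul : Real.exp (-x ^ 2 / 2) * Real.exp (x ^ 2 / 2 - 2) = Real.exp (-2) := by
    rw [← Real.exp_add]; ring_nf
  have h4 := mul_le_mul_of_nonneg_left h3 (Real.exp_pos (-x ^ 2 / 2)).le
  rw [mul_comm (16:ℝ) _, ← mul_assoc, hmul, Real.exp_neg] at h4
  refine h4.trans_eq ?_
  rw [div_eq_mul_inv]; ring

theorem stmt_13 (a : ℝ) (ha : 0 < a) :
    ∫ x in Set.Ioi a, Real.exp (-x ^ 2 / 2)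
      < 16 / (3 * Real.exp 1 ^ 2 * a ^ 3) := by
  set g : ℝ → ℝ := fun x => 16 / Real.exp 1 ^ 2 * x ^ (-4 : ℝ) with hg
  have hgi : IntegrableOn g (Ioi a) :=
    (integrableOn_Ioi_rpow_of_lt (by norm_num) ha).const_mul _
  have hfi : IntegrableOn (fun x => Real.exp (-x ^ 2 / 2)) (Ioi a) := by
    have := (integrable_exp_neg_mul_sq (by norm_num : (0:ℝ) < 1/2)).integrableOn (s := Ioi a)
    convert this using 2 with x
    ring_nf
  have hdiff : 0 < ∫ x in Ioi a, (g x - Real.exp (-x ^ 2 / 2)) := by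
    rw [setIntegral_pos_iff_support_of_nonneg_ae]
    · apply lt_of_lt_of_le _ (measure_mono (show Ioi (max a 2) ⊆ _ from ?_))
      · rw [Real.volume_Ioi]; norm_num
      · intro x hx
        rw [mem_Ioi, max_lt_iff] at hx
        refine ⟨?_, mem_Ioi.2 hx.1⟩
        have hgx : Real.exp (-x ^ 2 / 2) < g x := ptlt x (ha.trans hx.1) (ne_of_gt hx.2)
        simp only [Function.mem_support]
        intro h; linarith
    · filter_upwards [ae_restrict_mem measurableSet_Ioi] with x hx
      have hgx : Real.exp (-x ^ 2 / 2) ≤ g x := ptle x (ha.trans (mem_Ioi.1 hx))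
      simp only [Pi.zero_apply]; linarith
    · exact hgi.sub hfi
  rw [integral_sub hgi hfi] at hdiff
  have hgval : ∫ x in Ioi a, g x = 16 / (3 * Real.exp 1 ^ 2 * a ^ 3) := by
    rw [hg, integral_const_mul, integral_Ioi_rpow_of_lt (by norm_num) ha]
    rw [show (-4 : ℝ) + 1 = -(3:ℕ) by norm_num, Real.rpow_neg ha.le, Real.rpow_natCast]
    have := Real.exp_pos 1
    field_simp
    ring
  linarith [hgval ▸ hdiff]
end

section
/- For every $z \in [2/5, 4/3]$, $\int_{z-1/4}^{z+1/4}\int_0^\infty \exp(-\frac{x^2+y^2}{2})\sin(xy)\,dx\,dy > \frac{3}{20}$. -/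
open MeasureTheory Real

lemma nonneg_of_deriv (f f' : ℝ → ℝ) (hd : ∀ x, HasDerivAt f (f' x) x)
    (h0 : f 0 = 0) (hp : ∀ x, 0 ≤ x → 0 ≤ f' x) {t : ℝ} (ht : 0 ≤ t) : 0 ≤ f t := by
  have mono : MonotoneOn f (Set.Ici (0:ℝ)) := by
    apply monotoneOn_of_deriv_nonneg (convex_Ici 0)
      (fun x _ => (hd x).continuousAt.continuousWithinAt)
      (fun x _ => (hd x).differentiableAt.differentiableWithinAt)
    intro x hx
    rw [(hd x).deriv]
    exact hp x (le_of_lt (by simpa using hx))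
  calc (0:ℝ) = f 0 := h0.symm
  _ ≤ f t := mono (by simp) ht ht

lemma singe1 : ∀ t : ℝ, 0 ≤ t → t - t^3/6 ≤ sin t := by
  intro t ht
  have h0 := nonneg_of_deriv (fun t => sin t - (t - t^3/6)) (fun t => cos t - (1 - t^2/2))
    (fun x => by
      have h := (Real.hasDerivAt_sin x).sub ((hasDerivAt_id x).sub ((hasDerivAt_pow 3 x).div_const 6))
      exact h.congr_deriv (by push_cast; ring))
    (by norm_num)
    (fun x _ => by have := Real.one_sub_sq_div_two_le_cos (x := x); beta_reduce; linarith) ht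
  linarith [h0]

lemma cosle2 : ∀ t : ℝ, 0 ≤ t → cos t ≤ 1 - t^2/2 + t^4/24 := by
  intro t ht
  have h0 := nonneg_of_deriv (fun t => (1 - t^2/2 + t^4/24) - cos t) (fun t => sin t - (t - t^3/6))
    (fun x => by
      have h := ((((hasDerivAt_pow 2 x).div_const 2).const_sub 1).add ((hasDerivAt_pow 4 x).div_const 24)).sub (Real.hasDerivAt_cos x)
      exact h.congr_deriv (by push_cast; ring))
    (by norm_num)
    (fun x hx => by have := singe1 x hx; beta_reduce; linarith) ht
  linarith [h0]

lemma sinle2 : ∀ t : ℝ, 0 ≤ t → sin t ≤ t - t^3/6 + t^5/120 := by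
  intro t ht
  have h0 := nonneg_of_deriv (fun t => (t - t^3/6 + t^5/120) - sin t) (fun t => (1 - t^2/2 + t^4/24) - cos t)
    (fun x => by
      have h := (((hasDerivAt_id x).sub ((hasDerivAt_pow 3 x).div_const 6)).add ((hasDerivAt_pow 5 x).div_const 120)).sub (Real.hasDerivAt_sin x)
      exact h.congr_deriv (by push_cast; ring))
    (by norm_num)
    (fun x hx => by have := cosle2 x hx; beta_reduce; linarith) ht
  linarith [h0]

lemma cosge3 : ∀ t : ℝ, 0 ≤ t → 1 - t^2/2 + t^4/24 - t^6/720 ≤ cos t := by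
  intro t ht
  have h0 := nonneg_of_deriv (fun t => cos t - (1 - t^2/2 + t^4/24 - t^6/720)) (fun t => (t - t^3/6 + t^5/120) - sin t)
    (fun x => by
      have h := (Real.hasDerivAt_cos x).sub (((((hasDerivAt_pow 2 x).div_const 2).const_sub 1).add ((hasDerivAt_pow 4 x).div_const 24)).sub ((hasDerivAt_pow 6 x).div_const 720))
      exact h.congr_deriv (by push_cast; ring))
    (by norm_num)
    (fun x hx => by have := sinle2 x hx; beta_reduce; linarith) ht
  linarith [h0]

lemma singe3 : ∀ t : ℝ, 0 ≤ t → t - t^3/6 + t^5/120 - t^7/5040 ≤ sin t := by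
  intro t ht
  have h0 := nonneg_of_deriv (fun t => sin t - (t - t^3/6 + t^5/120 - t^7/5040)) (fun t => cos t - (1 - t^2/2 + t^4/24 - t^6/720))
    (fun x => by
      have h := (Real.hasDerivAt_sin x).sub ((((hasDerivAt_id x).sub ((hasDerivAt_pow 3 x).div_const 6)).add ((hasDerivAt_pow 5 x).div_const 120)).sub ((hasDerivAt_pow 7 x).div_const 5040))
      exact h.congr_deriv (by push_cast; ring))
    (by norm_num)
    (fun x hx => by have := cosge3 x hx; beta_reduce; linarith) ht
  linarith [h0]

lemma cosle4 : ∀ t : ℝ, 0 ≤ t → cos t ≤ 1 - t^2/2 + t^4/24 - t^6/720 + t^8/40320 := by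
  intro t ht
  have h0 := nonneg_of_deriv (fun t => (1 - t^2/2 + t^4/24 - t^6/720 + t^8/40320) - cos t) (fun t => sin t - (t - t^3/6 + t^5/120 - t^7/5040))
    (fun x => by
      have h := ((((((hasDerivAt_pow 2 x).div_const 2).const_sub 1).add ((hasDerivAt_pow 4 x).div_const 24)).sub ((hasDerivAt_pow 6 x).div_const 720)).add ((hasDerivAt_pow 8 x).div_const 40320)).sub (Real.hasDerivAt_cos x)
      exact h.congr_deriv (by push_cast; ring))
    (by norm_num)
    (fun x hx => by have := singe3 x hx; beta_reduce; linarith) ht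
  linarith [h0]

lemma sinle4 : ∀ t : ℝ, 0 ≤ t → sin t ≤ t - t^3/6 + t^5/120 - t^7/5040 + t^9/362880 := by
  intro t ht
  have h0 := nonneg_of_deriv (fun t => (t - t^3/6 + t^5/120 - t^7/5040 + t^9/362880) - sin t) (fun t => (1 - t^2/2 + t^4/24 - t^6/720 + t^8/40320) - cos t)
    (fun x => by
      have h := (((((hasDerivAt_id x).sub ((hasDerivAt_pow 3 x).div_const 6)).add ((hasDerivAt_pow 5 x).div_const 120)).sub ((hasDerivAt_pow 7 x).div_const 5040)).add ((hasDerivAt_pow 9 x).div_const 362880)).sub (Real.hasDerivAt_sin x)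
      exact h.congr_deriv (by push_cast; ring))
    (by norm_num)
    (fun x hx => by have := cosle4 x hx; beta_reduce; linarith) ht
  linarith [h0]

lemma cosge5 : ∀ t : ℝ, 0 ≤ t → 1 - t^2/2 + t^4/24 - t^6/720 + t^8/40320 - t^10/3628800 ≤ cos t := by
  intro t ht
  have h0 := nonneg_of_deriv (fun t => cos t - (1 - t^2/2 + t^4/24 - t^6/720 + t^8/40320 - t^10/3628800)) (fun t => (t - t^3/6 + t^5/120 - t^7/5040 + t^9/362880) - sin t)
    (fun x => by
      have h := (Real.hasDerivAt_cos x).sub (((((((hasDerivAt_pow 2 x).div_const 2).const_sub 1).add ((hasDerivAt_pow 4 x).div_const 24)).sub ((hasDerivAt_pow 6 x).div_const 720)).add ((hasDerivAt_pow 8 x).div_const 40320)).sub ((hasDerivAt_pow 10 x).div_const 3628800))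
      exact h.congr_deriv (by push_cast; ring))
    (by norm_num)
    (fun x hx => by have := sinle4 x hx; beta_reduce; linarith) ht
  linarith [h0]

lemma singe5 : ∀ t : ℝ, 0 ≤ t → t - t^3/6 + t^5/120 - t^7/5040 + t^9/362880 - t^11/39916800 ≤ sin t := by
  intro t ht
  have h0 := nonneg_of_deriv (fun t => sin t - (t - t^3/6 + t^5/120 - t^7/5040 + t^9/362880 - t^11/39916800)) (fun t => cos t - (1 - t^2/2 + t^4/24 - t^6/720 + t^8/40320 - t^10/3628800))
    (fun x => by
      have h := (Real.hasDerivAt_sin x).sub ((((((hasDerivAt_id x).sub ((hasDerivAt_pow 3 x).div_const 6)).add ((hasDerivAt_pow 5 x).div_const 120)).sub ((hasDerivAt_pow 7 x).div_const 5040)).add ((hasDerivAt_pow 9 x).div_const 362880)).sub ((hasDerivAt_pow 11 x).div_const 39916800))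
      exact h.congr_deriv (by push_cast; ring))
    (by norm_num)
    (fun x hx => by have := cosge5 x hx; beta_reduce; linarith) ht
  linarith [h0]

lemma expge1 : ∀ u : ℝ, 1 - u ≤ Real.exp (-u) := fun u => by
  have := Real.add_one_le_exp (-u); linarith

lemma hasDerivAt_expneg (u : ℝ) : HasDerivAt (fun x : ℝ => Real.exp (-x)) (-Real.exp (-u)) u := by
  have h := (hasDerivAt_neg u).exp
  convert h using 1; ring

lemma exple2 : ∀ u : ℝ, 0 ≤ u → Real.exp (-u) ≤ 1 - u + u^2/2 := by
  intro u hu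
  have h0 := nonneg_of_deriv (fun u => (1 - u + u^2/2) - Real.exp (-u)) (fun u => Real.exp (-u) - (1 - u))
    (fun x => by
      have h := ((((hasDerivAt_id x)).const_sub 1).add ((hasDerivAt_pow 2 x).div_const 2)).sub (hasDerivAt_expneg x)
      exact h.congr_deriv (by push_cast; ring))
    (by norm_num)
    (fun x hx => by have := expge1 x; beta_reduce; linarith) hu
  linarith [h0]

lemma expge3 : ∀ u : ℝ, 0 ≤ u → 1 - u + u^2/2 - u^3/6 ≤ Real.exp (-u) := by
  intro u hu
  have h0 := nonneg_of_deriv (fun u => Real.exp (-u) - (1 - u + u^2/2 - u^3/6)) (fun u => (1 - u + u^2/2) - Real.exp (-u))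
    (fun x => by
      have h := (hasDerivAt_expneg x).sub (((((hasDerivAt_id x)).const_sub 1).add ((hasDerivAt_pow 2 x).div_const 2)).sub ((hasDerivAt_pow 3 x).div_const 6))
      exact h.congr_deriv (by push_cast; ring))
    (by norm_num)
    (fun x hx => by have := exple2 x hx; beta_reduce; linarith) hu
  linarith [h0]

lemma exple4 : ∀ u : ℝ, 0 ≤ u → Real.exp (-u) ≤ 1 - u + u^2/2 - u^3/6 + u^4/24 := by
  intro u hu
  have h0 := nonneg_of_deriv (fun u => (1 - u + u^2/2 - u^3/6 + u^4/24) - Real.exp (-u)) (fun u => Real.exp (-u) - (1 - u + u^2/2 - u^3/6))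
    (fun x => by
      have h := ((((((hasDerivAt_id x)).const_sub 1).add ((hasDerivAt_pow 2 x).div_const 2)).sub ((hasDerivAt_pow 3 x).div_const 6)).add ((hasDerivAt_pow 4 x).div_const 24)).sub (hasDerivAt_expneg x)
      exact h.congr_deriv (by push_cast; ring))
    (by norm_num)
    (fun x hx => by have := expge3 x hx; beta_reduce; linarith) hu
  linarith [h0]

lemma expge5 : ∀ u : ℝ, 0 ≤ u → 1 - u + u^2/2 - u^3/6 + u^4/24 - u^5/120 ≤ Real.exp (-u) := by
  intro u hu
  have h0 := nonneg_of_deriv (fun u => Real.exp (-u) - (1 - u + u^2/2 - u^3/6 + u^4/24 - u^5/120)) (fun u => (1 - u + u^2/2 - u^3/6 + u^4/24) - Real.exp (-u))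
    (fun x => by
      have h := (hasDerivAt_expneg x).sub (((((((hasDerivAt_id x)).const_sub 1).add ((hasDerivAt_pow 2 x).div_const 2)).sub ((hasDerivAt_pow 3 x).div_const 6)).add ((hasDerivAt_pow 4 x).div_const 24)).sub ((hasDerivAt_pow 5 x).div_const 120))
      exact h.congr_deriv (by push_cast; ring))
    (by norm_num)
    (fun x hx => by have := exple4 x hx; beta_reduce; linarith) hu
  linarith [h0]

set_option linter.unreachableTactic false
set_option linter.unusedTactic false
set_option linter.unnecessarySeqFocus false
lemma tendsto_pg (n : ℕ) : Filter.Tendsto (fun x : ℝ => x ^ n * Real.exp (-x^2/2))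
    Filter.atTop (nhds 0) := by
  apply squeeze_zero' (g := fun x : ℝ => x ^ n * Real.exp (-x))
  · filter_upwards [Filter.eventually_ge_atTop (0:ℝ)] with x hx; positivity
  · filter_upwards [Filter.eventually_ge_atTop (2:ℝ)] with x hx
    have hxx : -x^2/2 ≤ -x := by nlinarith
    exact mul_le_mul_of_nonneg_left (Real.exp_le_exp.2 hxx) (pow_nonneg (by linarith) n)
  · exact tendsto_pow_mul_exp_neg_atTop_nhds_zero n

lemma intOn_pow_gauss (k : ℕ) :
    MeasureTheory.IntegrableOn (fun x : ℝ => x ^ k * Real.exp (-x^2/2)) (Set.Ioi 0) := by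
  have h := integrableOn_rpow_mul_exp_neg_mul_sq (b := 1/2) (by norm_num) (s := (k:ℝ))
    (by exact neg_one_lt_zero.trans_le (Nat.cast_nonneg k))
  apply h.congr_fun ?_ measurableSet_Ioi
  intro x _
  beta_reduce
  rw [Real.rpow_natCast]
  ring_nf

lemma hasDerivAt_gauss (x : ℝ) :
    HasDerivAt (fun x : ℝ => Real.exp (-x^2/2)) (-x * Real.exp (-x^2/2)) x := by
  have h := (((hasDerivAt_pow 2 x).div_const 2).neg).exp
  convert h using 1 <;> first | (funext y; simp only [Pi.neg_apply]; ring_nf) | (simp only [Pi.neg_apply]; push_cast; ring)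

lemma mom1 : ∫ x in Set.Ioi (0:ℝ), x ^ 1 * Real.exp (-x^2/2) = 1 := by
  have hd : ∀ x ∈ Set.Ici (0:ℝ),
      HasDerivAt (fun x : ℝ => -(1) * Real.exp (-x^2/2)) (x ^ 1 * Real.exp (-x^2/2)) x := by
    intro x _
    have h := ((hasDerivAt_const x (1:ℝ)).neg.mul (hasDerivAt_gauss x))
    exact h.congr_deriv (by simp only [Pi.neg_apply, Pi.add_apply]; push_cast; ring)
  have ht : Filter.Tendsto (fun x : ℝ => -(1) * Real.exp (-x^2/2)) Filter.atTop (nhds 0) := by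
    have h := (tendsto_pg 0).neg
    convert h using 1 <;> first | (funext y; push_cast; ring) | norm_num
  have h := MeasureTheory.integral_Ioi_of_hasDerivAt_of_tendsto' hd (intOn_pow_gauss 1) ht
  rw [h]; norm_num

lemma mom3 : ∫ x in Set.Ioi (0:ℝ), x ^ 3 * Real.exp (-x^2/2) = 2 := by
  have hd : ∀ x ∈ Set.Ici (0:ℝ),
      HasDerivAt (fun x : ℝ => -(x^2 + 2) * Real.exp (-x^2/2)) (x ^ 3 * Real.exp (-x^2/2)) x := by
    intro x _
    have h := (((hasDerivAt_pow 2 x).add_const 2).neg.mul (hasDerivAt_gauss x))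
    exact h.congr_deriv (by simp only [Pi.neg_apply, Pi.add_apply]; push_cast; ring)
  have ht : Filter.Tendsto (fun x : ℝ => -(x^2 + 2) * Real.exp (-x^2/2)) Filter.atTop (nhds 0) := by
    have h := ((tendsto_pg 2).add ((tendsto_pg 0).const_mul (2:ℝ))).neg
    convert h using 1 <;> first | (funext y; push_cast; ring) | norm_num
  have h := MeasureTheory.integral_Ioi_of_hasDerivAt_of_tendsto' hd (intOn_pow_gauss 3) ht
  rw [h]; norm_num

lemma mom5 : ∫ x in Set.Ioi (0:ℝ), x ^ 5 * Real.exp (-x^2/2) = 8 := by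
  have hd : ∀ x ∈ Set.Ici (0:ℝ),
      HasDerivAt (fun x : ℝ => -(x^4 + 4*x^2 + 8) * Real.exp (-x^2/2)) (x ^ 5 * Real.exp (-x^2/2)) x := by
    intro x _
    have h := ((((hasDerivAt_pow 4 x).add ((hasDerivAt_pow 2 x).const_mul 4)).add_const 8).neg.mul (hasDerivAt_gauss x))
    exact h.congr_deriv (by simp only [Pi.neg_apply, Pi.add_apply]; push_cast; ring)
  have ht : Filter.Tendsto (fun x : ℝ => -(x^4 + 4*x^2 + 8) * Real.exp (-x^2/2)) Filter.atTop (nhds 0) := by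
    have h := (((tendsto_pg 4).add ((tendsto_pg 2).const_mul (4:ℝ))).add ((tendsto_pg 0).const_mul (8:ℝ))).neg
    convert h using 1 <;> first | (funext y; push_cast; ring) | norm_num
  have h := MeasureTheory.integral_Ioi_of_hasDerivAt_of_tendsto' hd (intOn_pow_gauss 5) ht
  rw [h]; norm_num

lemma mom7 : ∫ x in Set.Ioi (0:ℝ), x ^ 7 * Real.exp (-x^2/2) = 48 := by
  have hd : ∀ x ∈ Set.Ici (0:ℝ),
      HasDerivAt (fun x : ℝ => -(x^6 + 6*x^4 + 24*x^2 + 48) * Real.exp (-x^2/2)) (x ^ 7 * Real.exp (-x^2/2)) x := by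
    intro x _
    have h := (((((hasDerivAt_pow 6 x).add ((hasDerivAt_pow 4 x).const_mul 6)).add ((hasDerivAt_pow 2 x).const_mul 24)).add_const 48).neg.mul (hasDerivAt_gauss x))
    exact h.congr_deriv (by simp only [Pi.neg_apply, Pi.add_apply]; push_cast; ring)
  have ht : Filter.Tendsto (fun x : ℝ => -(x^6 + 6*x^4 + 24*x^2 + 48) * Real.exp (-x^2/2)) Filter.atTop (nhds 0) := by
    have h := ((((tendsto_pg 6).add ((tendsto_pg 4).const_mul (6:ℝ))).add ((tendsto_pg 2).const_mul (24:ℝ))).add ((tendsto_pg 0).const_mul (48:ℝ))).neg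
    convert h using 1 <;> first | (funext y; push_cast; ring) | norm_num
  have h := MeasureTheory.integral_Ioi_of_hasDerivAt_of_tendsto' hd (intOn_pow_gauss 7) ht
  rw [h]; norm_num

lemma mom9 : ∫ x in Set.Ioi (0:ℝ), x ^ 9 * Real.exp (-x^2/2) = 384 := by
  have hd : ∀ x ∈ Set.Ici (0:ℝ),
      HasDerivAt (fun x : ℝ => -(x^8 + 8*x^6 + 48*x^4 + 192*x^2 + 384) * Real.exp (-x^2/2)) (x ^ 9 * Real.exp (-x^2/2)) x := by
    intro x _
    have h := ((((((hasDerivAt_pow 8 x).add ((hasDerivAt_pow 6 x).const_mul 8)).add ((hasDerivAt_pow 4 x).const_mul 48)).add ((hasDerivAt_pow 2 x).const_mul 192)).add_const 384).neg.mul (hasDerivAt_gauss x))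
    exact h.congr_deriv (by simp only [Pi.neg_apply, Pi.add_apply]; push_cast; ring)
  have ht : Filter.Tendsto (fun x : ℝ => -(x^8 + 8*x^6 + 48*x^4 + 192*x^2 + 384) * Real.exp (-x^2/2)) Filter.atTop (nhds 0) := by
    have h := (((((tendsto_pg 8).add ((tendsto_pg 6).const_mul (8:ℝ))).add ((tendsto_pg 4).const_mul (48:ℝ))).add ((tendsto_pg 2).const_mul (192:ℝ))).add ((tendsto_pg 0).const_mul (384:ℝ))).neg
    convert h using 1 <;> first | (funext y; push_cast; ring) | norm_num
  have h := MeasureTheory.integral_Ioi_of_hasDerivAt_of_tendsto' hd (intOn_pow_gauss 9) ht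
  rw [h]; norm_num

lemma mom11 : ∫ x in Set.Ioi (0:ℝ), x ^ 11 * Real.exp (-x^2/2) = 3840 := by
  have hd : ∀ x ∈ Set.Ici (0:ℝ),
      HasDerivAt (fun x : ℝ => -(x^10 + 10*x^8 + 80*x^6 + 480*x^4 + 1920*x^2 + 3840) * Real.exp (-x^2/2)) (x ^ 11 * Real.exp (-x^2/2)) x := by
    intro x _
    have h := (((((((hasDerivAt_pow 10 x).add ((hasDerivAt_pow 8 x).const_mul 10)).add ((hasDerivAt_pow 6 x).const_mul 80)).add ((hasDerivAt_pow 4 x).const_mul 480)).add ((hasDerivAt_pow 2 x).const_mul 1920)).add_const 3840).neg.mul (hasDerivAt_gauss x))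
    exact h.congr_deriv (by simp only [Pi.neg_apply, Pi.add_apply]; push_cast; ring)
  have ht : Filter.Tendsto (fun x : ℝ => -(x^10 + 10*x^8 + 80*x^6 + 480*x^4 + 1920*x^2 + 3840) * Real.exp (-x^2/2)) Filter.atTop (nhds 0) := by
    have h := ((((((tendsto_pg 10).add ((tendsto_pg 8).const_mul (10:ℝ))).add ((tendsto_pg 6).const_mul (80:ℝ))).add ((tendsto_pg 4).const_mul (480:ℝ))).add ((tendsto_pg 2).const_mul (1920:ℝ))).add ((tendsto_pg 0).const_mul (3840:ℝ))).neg
    convert h using 1 <;> first | (funext y; push_cast; ring) | norm_num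
  have h := MeasureTheory.integral_Ioi_of_hasDerivAt_of_tendsto' hd (intOn_pow_gauss 11) ht
  rw [h]; norm_num

lemma inner_val (y : ℝ) :
    (∫ x in Set.Ioi (0:ℝ), (y * (x^1 * Real.exp (-x^2/2)) - y^3/6 * (x^3 * Real.exp (-x^2/2)) + y^5/120 * (x^5 * Real.exp (-x^2/2)) - y^7/5040 * (x^7 * Real.exp (-x^2/2)) + y^9/362880 * (x^9 * Real.exp (-x^2/2)) - y^11/39916800 * (x^11 * Real.exp (-x^2/2)))) =
      y - y^3/3 + y^5/15 - y^7/105 + y^9/945 - y^11/10395 := by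
  have hd : ∀ x ∈ Set.Ici (0:ℝ),
      HasDerivAt (fun x : ℝ => -(y - y^3/6 * (x^2 + 2) + y^5/120 * (x^4 + 4*x^2 + 8) - y^7/5040 * (x^6 + 6*x^4 + 24*x^2 + 48) + y^9/362880 * (x^8 + 8*x^6 + 48*x^4 + 192*x^2 + 384) - y^11/39916800 * (x^10 + 10*x^8 + 80*x^6 + 480*x^4 + 1920*x^2 + 3840)) * Real.exp (-x^2/2))
        (y * (x^1 * Real.exp (-x^2/2)) - y^3/6 * (x^3 * Real.exp (-x^2/2)) + y^5/120 * (x^5 * Real.exp (-x^2/2)) - y^7/5040 * (x^7 * Real.exp (-x^2/2)) + y^9/362880 * (x^9 * Real.exp (-x^2/2)) - y^11/39916800 * (x^11 * Real.exp (-x^2/2))) x := by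
    intro x _
    have h := (((((((hasDerivAt_const x (y:ℝ)).sub (((hasDerivAt_pow 2 x).add_const (2:ℝ)).const_mul (y^3/6))).add ((((hasDerivAt_pow 4 x).add ((hasDerivAt_pow 2 x).const_mul (4:ℝ))).add_const (8:ℝ)).const_mul (y^5/120))).sub (((((hasDerivAt_pow 6 x).add ((hasDerivAt_pow 4 x).const_mul (6:ℝ))).add ((hasDerivAt_pow 2 x).const_mul (24:ℝ))).add_const (48:ℝ)).const_mul (y^7/5040))).add ((((((hasDerivAt_pow 8 x).add ((hasDerivAt_pow 6 x).const_mul (8:ℝ))).add ((hasDerivAt_pow 4 x).const_mul (48:ℝ))).add ((hasDerivAt_pow 2 x).const_mul (192:ℝ))).add_const (384:ℝ)).const_mul (y^9/362880))).sub (((((((hasDerivAt_pow 10 x).add ((hasDerivAt_pow 8 x).const_mul (10:ℝ))).add ((hasDerivAt_pow 6 x).const_mul (80:ℝ))).add ((hasDerivAt_pow 4 x).const_mul (480:ℝ))).add ((hasDerivAt_pow 2 x).const_mul (1920:ℝ))).add_const (3840:ℝ)).const_mul (y^11/39916800))).neg.mul (hasDerivAt_gauss x))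
    refine h.congr_deriv ?_; simp only [Pi.neg_apply, Pi.add_apply, Pi.sub_apply, Pi.mul_apply]; push_cast; ring
  have ht : Filter.Tendsto (fun x : ℝ => -(y - y^3/6 * (x^2 + 2) + y^5/120 * (x^4 + 4*x^2 + 8) - y^7/5040 * (x^6 + 6*x^4 + 24*x^2 + 48) + y^9/362880 * (x^8 + 8*x^6 + 48*x^4 + 192*x^2 + 384) - y^11/39916800 * (x^10 + 10*x^8 + 80*x^6 + 480*x^4 + 1920*x^2 + 3840)) * Real.exp (-x^2/2)) Filter.atTop (nhds 0) := by
    have h := (((((((tendsto_pg 0).const_mul (y)).sub (((tendsto_pg 2).add ((tendsto_pg 0).const_mul (2:ℝ))).const_mul (y^3/6))).add ((((tendsto_pg 4).add ((tendsto_pg 2).const_mul (4:ℝ))).add ((tendsto_pg 0).const_mul (8:ℝ))).const_mul (y^5/120))).sub (((((tendsto_pg 6).add ((tendsto_pg 4).const_mul (6:ℝ))).add ((tendsto_pg 2).const_mul (24:ℝ))).add ((tendsto_pg 0).const_mul (48:ℝ))).const_mul (y^7/5040))).add ((((((tendsto_pg 8).add ((tendsto_pg 6).const_mul (8:ℝ))).add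 ((tendsto_pg 4).const_mul (48:ℝ))).add ((tendsto_pg 2).const_mul (192:ℝ))).add ((tendsto_pg 0).const_mul (384:ℝ))).const_mul (y^9/362880))).sub (((((((tendsto_pg 10).add ((tendsto_pg 8).const_mul (10:ℝ))).add ((tendsto_pg 6).const_mul (80:ℝ))).add ((tendsto_pg 4).const_mul (480:ℝ))).add ((tendsto_pg 2).const_mul (1920:ℝ))).add ((tendsto_pg 0).const_mul (3840:ℝ))).const_mul (y^11/39916800))).neg
    convert h using 1 <;> first | (funext w; push_cast; ring) | norm_num
  have hint : MeasureTheory.IntegrableOn (fun x : ℝ =>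
      (y * (x^1 * Real.exp (-x^2/2)) - y^3/6 * (x^3 * Real.exp (-x^2/2))
        + y^5/120 * (x^5 * Real.exp (-x^2/2)) - y^7/5040 * (x^7 * Real.exp (-x^2/2))
        + y^9/362880 * (x^9 * Real.exp (-x^2/2)) - y^11/39916800 * (x^11 * Real.exp (-x^2/2))))
      (Set.Ioi 0) := by
    refine MeasureTheory.Integrable.congr
      ((((((((intOn_pow_gauss 1).const_mul y).sub ((intOn_pow_gauss 3).const_mul (y^3/6))).add
        ((intOn_pow_gauss 5).const_mul (y^5/120))).sub ((intOn_pow_gauss 7).const_mul (y^7/5040))).add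
        ((intOn_pow_gauss 9).const_mul (y^9/362880))).sub ((intOn_pow_gauss 11).const_mul (y^11/39916800))))
      (Filter.Eventually.of_forall fun x => by simp [Pi.sub_apply, Pi.add_apply])
  have h := MeasureTheory.integral_Ioi_of_hasDerivAt_of_tendsto' hd hint ht
  rw [h]
  norm_num
  ring

lemma inner_ge (y : ℝ) (hy : 0 ≤ y) :
    Real.exp (-y^2/2) * (y - y^3/3 + y^5/15 - y^7/105 + y^9/945 - y^11/10395) ≤
      ∫ x in Set.Ioi (0:ℝ), Real.exp (-(x^2+y^2)/2) * Real.sin (x*y) := by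
  have hrw : (fun x : ℝ => Real.exp (-(x^2+y^2)/2) * Real.sin (x*y)) =
      fun x : ℝ => Real.exp (-y^2/2) * (Real.exp (-x^2/2) * Real.sin (x*y)) := by
    funext x
    rw [show (-(x^2+y^2)/2 : ℝ) = (-y^2/2) + (-x^2/2) by ring, Real.exp_add, mul_assoc]
  rw [hrw, MeasureTheory.integral_const_mul]
  apply mul_le_mul_of_nonneg_left ?_ (Real.exp_nonneg _)
  have hg : MeasureTheory.IntegrableOn (fun x : ℝ => Real.exp (-x^2/2)) (Set.Ioi 0) := by
    have := intOn_pow_gauss 0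
    simpa using this
  have hint_sin : MeasureTheory.IntegrableOn
      (fun x : ℝ => Real.exp (-x^2/2) * Real.sin (x*y)) (Set.Ioi 0) := by
    apply hg.mono' (Continuous.aestronglyMeasurable (by fun_prop))
    filter_upwards with x
    rw [norm_mul, Real.norm_eq_abs, Real.norm_eq_abs, abs_of_pos (Real.exp_pos _)]
    nlinarith [Real.neg_one_le_sin (x*y), Real.sin_le_one (x*y), Real.exp_pos (-x^2/2),
      abs_le.mpr ⟨Real.neg_one_le_sin (x*y), Real.sin_le_one (x*y)⟩,
      abs_nonneg (Real.sin (x*y)), Real.exp_pos (-x^2/2)]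
  have i1 := (intOn_pow_gauss 1).const_mul y
  have i3 := (intOn_pow_gauss 3).const_mul (y^3/6)
  have i5 := (intOn_pow_gauss 5).const_mul (y^5/120)
  have i7 := (intOn_pow_gauss 7).const_mul (y^7/5040)
  have i9 := (intOn_pow_gauss 9).const_mul (y^9/362880)
  have i11 := (intOn_pow_gauss 11).const_mul (y^11/39916800)
  have key : (∫ x in Set.Ioi (0:ℝ),
      (y * (x^1 * Real.exp (-x^2/2)) - y^3/6 * (x^3 * Real.exp (-x^2/2))
        + y^5/120 * (x^5 * Real.exp (-x^2/2)) - y^7/5040 * (x^7 * Real.exp (-x^2/2))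
        + y^9/362880 * (x^9 * Real.exp (-x^2/2)) - y^11/39916800 * (x^11 * Real.exp (-x^2/2)))) ≤
      ∫ x in Set.Ioi (0:ℝ), Real.exp (-x^2/2) * Real.sin (x*y) := by
    apply MeasureTheory.setIntegral_mono_on
      ((((((i1.sub i3).add i5).sub i7).add i9).sub i11)) hint_sin measurableSet_Ioi
    intro x hx
    have ht : 0 ≤ x * y := mul_nonneg (le_of_lt hx) hy
    have hs := singe5 (x*y) ht
    calc y * (x^1 * Real.exp (-x^2/2)) - y^3/6 * (x^3 * Real.exp (-x^2/2))
        + y^5/120 * (x^5 * Real.exp (-x^2/2)) - y^7/5040 * (x^7 * Real.exp (-x^2/2))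
        + y^9/362880 * (x^9 * Real.exp (-x^2/2)) - y^11/39916800 * (x^11 * Real.exp (-x^2/2))
        = Real.exp (-x^2/2) * ((x*y) - (x*y)^3/6 + (x*y)^5/120 - (x*y)^7/5040
            + (x*y)^9/362880 - (x*y)^11/39916800) := by ring
      _ ≤ Real.exp (-x^2/2) * Real.sin (x*y) :=
          mul_le_mul_of_nonneg_left hs (Real.exp_nonneg _)
  exact le_trans (le_of_eq (inner_val y).symm) key
noncomputable def Mlb (y : ℝ) : ℝ :=
  (1 - y^2/2 + y^4/8 - y^6/48 + y^8/384 - y^10/3840) *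
    (y - y^3/3 + y^5/15 - y^7/105 + y^9/945 - y^11/10395)

noncomputable def Apoly (y : ℝ) : ℝ := y^2/2 - 5*y^4/24 + 43*y^6/720 - 59*y^8/4480 + 2867*y^10/1209600 - 11531*y^12/31933440 + 9*y^14/197120 - 3043*y^16/638668800 + 289*y^18/718502400 - y^20/38016000 + y^22/878169600

lemma hasDerivAt_Apoly (y : ℝ) : HasDerivAt Apoly (Mlb y) y := by
  have h := ((((((((((((hasDerivAt_pow 2 y).const_mul (1/2 : ℝ)).sub ((hasDerivAt_pow 4 y).const_mul (5/24 : ℝ))).add ((hasDerivAt_pow 6 y).const_mul (43/720 : ℝ))).sub ((hasDerivAt_pow 8 y).const_mul (59/4480 : ℝ))).add ((hasDerivAt_pow 10 y).const_mul (2867/1209600 : ℝ))).sub ((hasDerivAt_pow 12 y).const_mul (11531/31933440 : ℝ))).add ((hasDerivAt_pow 14 y).const_mul (9/197120 : ℝ))).sub ((hasDerivAt_pow 16 y).const_mul (3043/638668800 : ℝ))).add ((hasDerivAt_pow 18 y).const_mul (289/718502400 : ℝ))).sub ((hasDerivAt_pow 20 y).const_mul (1/38016000 : ℝ))).add ((hasDerivAt_pow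 22 y).const_mul (1/878169600 : ℝ)))
  convert h using 1 <;> first | rfl | (funext w; unfold Apoly; simp only [Pi.add_apply, Pi.sub_apply]; push_cast; ring) | (unfold Mlb; push_cast; ring)

lemma Mlb_cont : Continuous Mlb := by unfold Mlb; fun_prop

lemma integral_Mlb (c d : ℝ) (h : c ≤ d) :
    ∫ y in Set.Icc c d, Mlb y = Apoly d - Apoly c := by
  rw [MeasureTheory.integral_Icc_eq_integral_Ioc, ← intervalIntegral.integral_of_le h]
  exact intervalIntegral.integral_eq_sub_of_hasDerivAt (fun y _ => hasDerivAt_Apoly y)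
    (Mlb_cont.intervalIntegrable c d)

lemma Paux {s : ℝ} (h0 : 0 ≤ s) (h1 : s ≤ 251/100) :
    0 ≤ 10395 - 3465*s + 693*s^2 - 99*s^3 + 11*s^4 - s^5 := by
  nlinarith [mul_nonneg (show (0:ℝ) ≤ 251/100 - s by linarith) (sq_nonneg s),
    mul_nonneg (show (0:ℝ) ≤ 11 - s by linarith) (pow_nonneg h0 4),
    sq_nonneg (s - 39/10), sq_nonneg s, pow_nonneg h0 3, pow_nonneg h0 4]

lemma Eaux {s : ℝ} (h0 : 0 ≤ s) (h1 : s ≤ 251/100) :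
    0 ≤ 3840 - 1920*s + 480*s^2 - 80*s^3 + 10*s^4 - s^5 := by
  nlinarith [mul_nonneg (show (0:ℝ) ≤ 251/100 - s by linarith) (sq_nonneg s),
    mul_nonneg (show (0:ℝ) ≤ 10 - s by linarith) (pow_nonneg h0 4),
    sq_nonneg (s - 7/2), sq_nonneg s, pow_nonneg h0 3, pow_nonneg h0 4]

lemma Ppos {y : ℝ} (h0 : 0 ≤ y) (h1 : y ≤ 19/12) :
    0 ≤ y - y^3/3 + y^5/15 - y^7/105 + y^9/945 - y^11/10395 := by
  have hs : y^2 ≤ 251/100 := by nlinarith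
  have h := Paux (sq_nonneg y) hs
  nlinarith [mul_nonneg h0 h]

lemma Epos {y : ℝ} (h0 : 0 ≤ y) (h1 : y ≤ 19/12) :
    0 ≤ 1 - y^2/2 + y^4/8 - y^6/48 + y^8/384 - y^10/3840 := by
  have hs : y^2 ≤ 251/100 := by nlinarith
  have h := Eaux (sq_nonneg y) hs
  nlinarith [h]

lemma Mlb_le_inner {y : ℝ} (h0 : 0 ≤ y) (h1 : y ≤ 19/12) :
    Mlb y ≤ ∫ x in Set.Ioi (0:ℝ), Real.exp (-(x^2+y^2)/2) * Real.sin (x*y) := by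
  refine le_trans ?_ (inner_ge y h0)
  unfold Mlb
  have hE : 1 - y^2/2 + y^4/8 - y^6/48 + y^8/384 - y^10/3840 ≤ Real.exp (-y^2/2) := by
    have h := expge5 (y^2/2) (by positivity)
    have : Real.exp (-(y^2/2)) = Real.exp (-y^2/2) := by ring_nf
    nlinarith [h]
  exact mul_le_mul_of_nonneg_right hE (Ppos h0 h1)

lemma Mlb_nonneg {y : ℝ} (h0 : 0 ≤ y) (h1 : y ≤ 19/12) : 0 ≤ Mlb y :=
  mul_nonneg (Epos h0 h1) (Ppos h0 h1)

lemma int_inner (y : ℝ) : MeasureTheory.IntegrableOn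
    (fun x : ℝ => Real.exp (-(x^2+y^2)/2) * Real.sin (x*y)) (Set.Ioi 0) := by
  have hg : MeasureTheory.IntegrableOn (fun x : ℝ => Real.exp (-x^2/2)) (Set.Ioi 0) := by
    simpa using intOn_pow_gauss 0
  apply hg.mono' (Continuous.aestronglyMeasurable (by fun_prop))
  filter_upwards with x
  rw [norm_mul, Real.norm_eq_abs, Real.norm_eq_abs, abs_of_pos (Real.exp_pos _)]
  have h1 : |Real.sin (x*y)| ≤ 1 := abs_le.mpr ⟨Real.neg_one_le_sin _, Real.sin_le_one _⟩
  have h2 : Real.exp (-(x^2+y^2)/2) ≤ Real.exp (-x^2/2) :=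
    Real.exp_le_exp.2 (by nlinarith [sq_nonneg y])
  nlinarith [Real.exp_pos (-(x^2+y^2)/2), abs_nonneg (Real.sin (x*y))]

set_option maxHeartbeats 2000000 in
lemma main_step {z c d : ℝ} (hz1 : 2/5 ≤ z) (hz2 : z ≤ 4/3)
    (hc : z - 1/4 ≤ c) (hd : d ≤ z + 1/4) (hcd : c ≤ d)
    (hval : 3/20 < Apoly d - Apoly c) :
    (3 / 20 : ℝ) <
      ∫ y in Set.Icc (z - 1 / 4) (z + 1 / 4),
        ∫ x in Set.Ioi (0 : ℝ),
          Real.exp (-(x ^ 2 + y ^ 2) / 2) * Real.sin (x * y) := by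
  have hmeas : MeasureTheory.AEStronglyMeasurable
      (fun y : ℝ => ∫ x in Set.Ioi (0:ℝ), Real.exp (-(x^2+y^2)/2) * Real.sin (x*y))
      (MeasureTheory.volume.restrict (Set.Icc (z - 1/4) (z + 1/4))) := by
    have hSM : MeasureTheory.StronglyMeasurable
        (fun p : ℝ × ℝ => Real.exp (-(p.2^2 + p.1^2)/2) * Real.sin (p.2 * p.1)) :=
      Continuous.stronglyMeasurable (by fun_prop)
    exact hSM.integral_prod_right'.aestronglyMeasurable
  have hg : MeasureTheory.IntegrableOn (fun x : ℝ => Real.exp (-x^2/2)) (Set.Ioi 0) := by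
    simpa using intOn_pow_gauss 0
  have hIint : MeasureTheory.IntegrableOn
      (fun y : ℝ => ∫ x in Set.Ioi (0:ℝ), Real.exp (-(x^2+y^2)/2) * Real.sin (x*y))
      (Set.Icc (z - 1/4) (z + 1/4)) := by
    have hconst : MeasureTheory.IntegrableOn
        (fun _ : ℝ => ∫ x in Set.Ioi (0:ℝ), Real.exp (-x^2/2))
        (Set.Icc (z - 1/4) (z + 1/4)) MeasureTheory.volume :=
      MeasureTheory.integrableOn_const measure_Icc_lt_top.ne
    refine MeasureTheory.Integrable.mono' hconst hmeas ?_
    filter_upwards with y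
    calc ‖∫ x in Set.Ioi (0:ℝ), Real.exp (-(x^2+y^2)/2) * Real.sin (x*y)‖
        ≤ ∫ x in Set.Ioi (0:ℝ), ‖Real.exp (-(x^2+y^2)/2) * Real.sin (x*y)‖ :=
          MeasureTheory.norm_integral_le_integral_norm _
      _ ≤ ∫ x in Set.Ioi (0:ℝ), Real.exp (-x^2/2) := by
          apply MeasureTheory.setIntegral_mono_on ((int_inner y).norm) hg measurableSet_Ioi
          intro x _
          rw [norm_mul, Real.norm_eq_abs, Real.norm_eq_abs, abs_of_pos (Real.exp_pos _)]
          have h1 : |Real.sin (x*y)| ≤ 1 := abs_le.mpr ⟨Real.neg_one_le_sin _, Real.sin_le_one _⟩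
          have h2 : Real.exp (-(x^2+y^2)/2) ≤ Real.exp (-x^2/2) :=
            Real.exp_le_exp.2 (by nlinarith [sq_nonneg y])
          nlinarith [Real.exp_pos (-(x^2+y^2)/2), abs_nonneg (Real.sin (x*y))]
  have hMint : MeasureTheory.IntegrableOn Mlb (Set.Icc (z - 1/4) (z + 1/4)) :=
    Mlb_cont.integrableOn_Icc
  have step1 : (∫ y in Set.Icc (z - 1/4) (z + 1/4), Mlb y) ≤
      ∫ y in Set.Icc (z - 1/4) (z + 1/4),
        ∫ x in Set.Ioi (0:ℝ), Real.exp (-(x^2+y^2)/2) * Real.sin (x*y) := by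
    apply MeasureTheory.setIntegral_mono_on hMint hIint measurableSet_Icc
    intro y hy
    obtain ⟨hy1, hy2⟩ := Set.mem_Icc.1 hy
    exact Mlb_le_inner (by linarith) (by linarith)
  have step2 : (∫ y in Set.Icc c d, Mlb y) ≤ ∫ y in Set.Icc (z - 1/4) (z + 1/4), Mlb y := by
    apply MeasureTheory.setIntegral_mono_set hMint ?_
      (HasSubset.Subset.eventuallyLE (Set.Icc_subset_Icc hc hd))
    have hae : ∀ᵐ y ∂(MeasureTheory.volume.restrict (Set.Icc (z - 1/4) (z + 1/4))),
        0 ≤ Mlb y := by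
      rw [MeasureTheory.ae_restrict_iff' measurableSet_Icc]
      filter_upwards with y hy
      obtain ⟨hy1, hy2⟩ := Set.mem_Icc.1 hy
      exact Mlb_nonneg (by linarith) (by linarith)
    exact hae
  rw [integral_Mlb c d hcd] at step2
  have goal_eq : (∫ y in Set.Icc (z - 1/4) (z + 1/4),
      ∫ x in Set.Ioi (0:ℝ), Real.exp (-(x^2+y^2)/2) * Real.sin (x*y)) =
      ∫ y in Set.Icc (z - 1 / 4) (z + 1 / 4),
        ∫ x in Set.Ioi (0 : ℝ), Real.exp (-(x ^ 2 + y ^ 2) / 2) * Real.sin (x * y) := rfl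
  linarith [hval, step1, step2]

theorem stmt_14 (z : ℝ) (hz : z ∈ Set.Icc (2 / 5 : ℝ) (4 / 3)) :
    (3 / 20 : ℝ) <
      ∫ y in Set.Icc (z - 1 / 4) (z + 1 / 4),
        ∫ x in Set.Ioi (0 : ℝ),
          Real.exp (-(x ^ 2 + y ^ 2) / 2) * Real.sin (x * y) := by
  obtain ⟨hz1, hz2⟩ := hz
  rcases le_total z (489/1000) with h0|h0
  · exact main_step (c := 239/1000) (d := 13/20) hz1 hz2 (by linarith) (by linarith) (by norm_num) (by norm_num [Apoly])
  rcases le_total z (317/500) with h1|h1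
  · exact main_step (c := 48/125) (d := 739/1000) hz1 hz2 (by linarith) (by linarith) (by norm_num) (by norm_num [Apoly])
  rcases le_total z (809/1000) with h2|h2
  · exact main_step (c := 559/1000) (d := 221/250) hz1 hz2 (by linarith) (by linarith) (by norm_num) (by norm_num [Apoly])
  rcases le_total z (49/50) with h3|h3
  · exact main_step (c := 73/100) (d := 1059/1000) hz1 hz2 (by linarith) (by linarith) (by norm_num) (by norm_num [Apoly])
  rcases le_total z (561/500) with h4|h4
  · exact main_step (c := 109/125) (d := 123/100) hz1 hz2 (by linarith) (by linarith) (by norm_num) (by norm_num [Apoly])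
  rcases le_total z (153/125) with h5|h5
  · exact main_step (c := 487/500) (d := 343/250) hz1 hz2 (by linarith) (by linarith) (by norm_num) (by norm_num [Apoly])
  rcases le_total z (161/125) with h6|h6
  · exact main_step (c := 519/500) (d := 737/500) hz1 hz2 (by linarith) (by linarith) (by norm_num) (by norm_num [Apoly])
  rcases le_total z (331/250) with h7|h7
  · exact main_step (c := 537/500) (d := 769/500) hz1 hz2 (by linarith) (by linarith) (by norm_num) (by norm_num [Apoly])
  exact main_step (c := 13/12) (d := 787/500) hz1 hz2 (by linarith) (by linarith) (by norm_num) (by norm_num [Apoly])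
end
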